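/- arXiv:1209.3957 — 3 statements merged into one kernel-verified Lean document; each statement's English description precedes it below -/
import Mathlib

section
/- Let 0<α<2 and 0<β<1, and let M_β be the Mittag-Leffler process (the inverse of a β-stable subordinator) on a probability space (Ω',F',P'). Then for every c>0, every k≥1, all t_1,…,t_k≥0 and all real θ_1,…,θ_k, one has ∫_0^∞ E'| Σ_{j=1}^k θ_j M_β((c t_j − x)_+) |^α (1−β) x^{−β} dx = c^{αH} ∫_0^∞ E'| Σ_{j=1}^k θ_j M_β((t_j − x)_+) |^α (1−β) x^{−β} dx, where H = β + (1−β)/α. (This identity expresses that the β-Mittag-Leffler fractional SαS motion is self-similar with exponent H.) -/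
open MeasureTheory ProbabilityTheory Filter
open scoped ENNReal
open scoped Pointwise

/-- The (generalized right-continuous) inverse of the path `S ω`, i.e. the
Mittag-Leffler process when `S` is a `β`-stable subordinator. -/
noncomputable def invProc {Ω : Type*} (S : Ω → ℝ → ℝ) (ω : Ω) (t : ℝ) : ℝ :=
  sInf {u : ℝ | 0 ≤ u ∧ t ≤ S ω u}

section Basic
variable {Ω : Type*} {S : Ω → ℝ → ℝ} {ω : Ω} {s u : ℝ}

lemma invProc_nonneg (S : Ω → ℝ → ℝ) (ω : Ω) (s : ℝ) : 0 ≤ invProc S ω s :=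
  Real.sInf_nonneg fun _ hx => hx.1

lemma invProc_le_iff (hmono : Monotone (S ω))
    (hrc : ContinuousWithinAt (S ω) (Set.Ici u) u)
    (hne : {v : ℝ | 0 ≤ v ∧ s ≤ S ω v}.Nonempty) (hu : 0 ≤ u) :
    invProc S ω s ≤ u ↔ s ≤ S ω u := by
  constructor
  · intro h
    have h1 : ∀ w, u < w → s ≤ S ω w := by
      intro w hw
      have hbdd : BddBelow {v : ℝ | 0 ≤ v ∧ s ≤ S ω v} := ⟨0, fun v hv => hv.1⟩
      have hlt : sInf {v : ℝ | 0 ≤ v ∧ s ≤ S ω v} < w := lt_of_le_of_lt h hw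
      obtain ⟨v, hv, hvw⟩ := (csInf_lt_iff hbdd hne).mp hlt
      exact hv.2.trans (hmono hvw.le)
    have h2 : Tendsto (S ω) (nhdsWithin u (Set.Ioi u)) (nhds (S ω u)) :=
      hrc.mono_left (nhdsWithin_mono u Set.Ioi_subset_Ici_self)
    exact ge_of_tendsto h2 (eventually_mem_nhdsWithin.mono fun w hw => h1 w hw)
  · intro h
    exact csInf_le ⟨0, fun v hv => hv.1⟩ ⟨hu, h⟩

lemma invProc_nonempty_iff (hmono : Monotone (S ω)) :
    {v : ℝ | 0 ≤ v ∧ s ≤ S ω v}.Nonempty ↔ ∃ n : ℕ, s ≤ S ω n := by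
  constructor
  · rintro ⟨v, hv0, hsv⟩
    obtain ⟨n, hn⟩ := exists_nat_ge v
    exact ⟨n, hsv.trans (hmono hn)⟩
  · rintro ⟨n, hn⟩
    exact ⟨n, Nat.cast_nonneg n, hn⟩

lemma invProc_scale {c r : ℝ} (hc : 0 < c) (hr : 0 < r) (m : ℝ) :
    invProc (fun ω u => c⁻¹ * S ω (r * u)) ω m = r⁻¹ * invProc S ω (c * m) := by
  have hset : {u : ℝ | 0 ≤ u ∧ m ≤ c⁻¹ * S ω (r * u)}
      = r⁻¹ • {w : ℝ | 0 ≤ w ∧ c * m ≤ S ω w} := by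
    ext u
    simp only [Set.mem_smul_set, Set.mem_setOf_eq, smul_eq_mul]
    constructor
    · rintro ⟨hu0, hmu⟩
      refine ⟨r * u, ⟨by positivity, (le_inv_mul_iff₀ hc).mp hmu⟩, by field_simp⟩
    · rintro ⟨w, ⟨hw0, hcm⟩, rfl⟩
      constructor
      · positivity
      · rw [le_inv_mul_iff₀ hc]
        have : r * (r⁻¹ * w) = w := by field_simp
        rw [this]
        exact hcm
  rw [invProc, hset, Real.sInf_smul_of_nonneg (inv_nonneg.mpr hr.le), invProc, smul_eq_mul]

end Basic

/-- `S` is a `β`-stable subordinator on the probability space `(Ω, P)`: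
it starts at `0`, has nondecreasing right-continuous sample paths, independent
increments, and Laplace transform `E[exp (-θ (S u - S v))] = exp (-(u-v) θ^β)`. -/
structure IsStableSubordinator {Ω : Type*} [MeasurableSpace Ω] (β : ℝ) (P : Measure Ω)
    (S : Ω → ℝ → ℝ) : Prop where
  zero : ∀ ω, S ω 0 = 0
  mono : ∀ ω, Monotone (S ω)
  rightCont : ∀ ω, ∀ u : ℝ, ContinuousWithinAt (S ω) (Set.Ici u) u
  meas : ∀ u : ℝ, Measurable fun ω => S ω u
  indep : ∀ (n : ℕ) (t : Fin (n + 1) → ℝ), Monotone t → 0 ≤ t 0 →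
    iIndepFun
      (fun i : Fin n => fun ω => S ω (t i.succ) - S ω (t i.castSucc)) P
  laplace : ∀ θ : ℝ, 0 ≤ θ → ∀ v u : ℝ, 0 ≤ v → v ≤ u →
    ∫ ω, Real.exp (-θ * (S ω u - S ω v)) ∂P = Real.exp (-(u - v) * θ ^ β)

section Subordinator

variable {Ω : Type*} [MeasurableSpace Ω] {P : Measure Ω} {β : ℝ} {S : Ω → ℝ → ℝ}

/-- measurability of the inverse process at a fixed time. -/
lemma measurable_invProc (hS : IsStableSubordinator β P S) (s : ℝ) :
    Measurable fun ω => invProc S ω s := by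
  have hA : MeasurableSet {ω | ∃ n : ℕ, s ≤ S ω (n : ℝ)} := by
    have : {ω | ∃ n : ℕ, s ≤ S ω (n : ℝ)} = ⋃ n : ℕ, {ω | s ≤ S ω (n : ℝ)} := by
      ext ω; simp
    rw [this]
    exact MeasurableSet.iUnion fun n => measurableSet_le measurable_const (hS.meas _)
  apply measurable_of_Iic
  intro u
  by_cases hu : 0 ≤ u
  · have : (fun ω => invProc S ω s) ⁻¹' Set.Iic u
        = {ω | ∃ n : ℕ, s ≤ S ω (n : ℝ)}ᶜ ∪ {ω | s ≤ S ω u} := by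
      ext ω
      simp only [Set.mem_preimage, Set.mem_Iic, Set.mem_union, Set.mem_compl_iff,
        Set.mem_setOf_eq]
      constructor
      · intro h
        by_cases hA' : ∃ n : ℕ, s ≤ S ω (n : ℝ)
        · exact Or.inr ((invProc_le_iff (hS.mono ω) (hS.rightCont ω u)
            ((invProc_nonempty_iff (hS.mono ω)).mpr hA') hu).mp h)
        · exact Or.inl hA'
      · rintro (h | h)
        · have hempty : {v : ℝ | 0 ≤ v ∧ s ≤ S ω v} = ∅ := by
            rw [Set.eq_empty_iff_forall_notMem]
            intro v hv
            exact h ((invProc_nonempty_iff (hS.mono ω)).mp ⟨v, hv⟩)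
          rw [invProc, hempty, Real.sInf_empty]
          exact hu
        · exact csInf_le ⟨0, fun v hv => hv.1⟩ ⟨hu, h⟩
    rw [this]
    exact (hA.compl).union (measurableSet_le measurable_const (hS.meas _))
  · have : (fun ω => invProc S ω s) ⁻¹' Set.Iic u = ∅ := by
      rw [Set.eq_empty_iff_forall_notMem]
      intro ω hω
      exact hu (le_trans (invProc_nonneg S ω s) hω)
    rw [this]
    exact MeasurableSet.empty

/-- a.s. the path is unbounded: the set where it stays below `s` is null. -/
lemma null_of_bounded [IsProbabilityMeasure P] (hS : IsStableSubordinator β P S) (s : ℝ) :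
    P {ω | ∀ n : ℕ, S ω (n : ℝ) < s} = 0 := by
  have hbound : ∀ n : ℕ, P {ω | ∀ m : ℕ, S ω (m : ℝ) < s}
      ≤ ENNReal.ofReal (Real.exp s * Real.exp (-(n : ℝ))) := by
    intro n
    have hnn : ∀ ω, 0 ≤ S ω (n : ℝ) := by
      intro ω
      have := hS.mono ω (Nat.cast_nonneg n : (0:ℝ) ≤ n)
      rwa [hS.zero ω] at this
    have hint : Integrable (fun ω => Real.exp (-S ω (n : ℝ))) P := by
      refine Integrable.mono' (integrable_const 1)
        ((hS.meas (n : ℝ)).neg.exp).aestronglyMeasurable (ae_of_all _ fun ω => ?_)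
      rw [Real.norm_eq_abs, abs_of_pos (Real.exp_pos _)]
      exact Real.exp_le_one_iff.mpr (neg_nonpos.mpr (hnn ω))
    have hlap : ∫ ω, Real.exp (-S ω (n : ℝ)) ∂P = Real.exp (-(n : ℝ)) := by
      have := hS.laplace 1 zero_le_one 0 (n : ℝ) le_rfl (Nat.cast_nonneg n)
      simp only [hS.zero, sub_zero, neg_mul, one_mul, Real.one_rpow, mul_one] at this
      exact this
    have hlint : ∫⁻ ω, ENNReal.ofReal (Real.exp (-S ω (n : ℝ))) ∂P
        = ENNReal.ofReal (Real.exp (-(n : ℝ))) := by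
      rw [← ofReal_integral_eq_lintegral_ofReal hint
        (ae_of_all _ fun ω => (Real.exp_pos _).le), hlap]
    have hmarkov := mul_meas_ge_le_lintegral₀
      (μ := P) (f := fun ω => ENNReal.ofReal (Real.exp (-S ω (n : ℝ))))
      (((hS.meas (n : ℝ)).neg.exp).ennreal_ofReal).aemeasurable
      (ENNReal.ofReal (Real.exp (-s)))
    rw [hlint] at hmarkov
    have hsub : {ω | ∀ m : ℕ, S ω (m : ℝ) < s}
        ⊆ {ω | ENNReal.ofReal (Real.exp (-s)) ≤ ENNReal.ofReal (Real.exp (-S ω (n : ℝ)))} := by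
      intro ω hω
      have hlt : S ω (n : ℝ) < s := hω n
      exact ENNReal.ofReal_le_ofReal (Real.exp_le_exp.mpr (by linarith))
    have h1 : ENNReal.ofReal (Real.exp (-s)) * P {ω | ∀ m : ℕ, S ω (m : ℝ) < s}
        ≤ ENNReal.ofReal (Real.exp (-(n : ℝ))) :=
      le_trans (mul_le_mul_right (measure_mono hsub) _) hmarkov
    have hε0 : (ENNReal.ofReal (Real.exp (-s))) ≠ 0 := by
      simp [ENNReal.ofReal_eq_zero, not_le, Real.exp_pos]
    have hεt : (ENNReal.ofReal (Real.exp (-s))) ≠ ⊤ := ENNReal.ofReal_ne_top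
    calc P {ω | ∀ m : ℕ, S ω (m : ℝ) < s}
        = (ENNReal.ofReal (Real.exp (-s)))⁻¹
          * (ENNReal.ofReal (Real.exp (-s)) * P {ω | ∀ m : ℕ, S ω (m : ℝ) < s}) := by
          rw [← mul_assoc, ENNReal.inv_mul_cancel hε0 hεt, one_mul]
      _ ≤ (ENNReal.ofReal (Real.exp (-s)))⁻¹ * ENNReal.ofReal (Real.exp (-(n : ℝ))) :=
          mul_le_mul_right h1 _
      _ = ENNReal.ofReal (Real.exp s * Real.exp (-(n : ℝ))) := by
          rw [← ENNReal.ofReal_inv_of_pos (Real.exp_pos _), ← Real.exp_neg, neg_neg,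
            ENNReal.ofReal_mul (Real.exp_pos s).le]
  have htend : Tendsto (fun n : ℕ => ENNReal.ofReal (Real.exp s * Real.exp (-(n : ℝ))))
      atTop (nhds 0) := by
    have h1 : Tendsto (fun n : ℕ => Real.exp s * Real.exp (-(n : ℝ))) atTop (nhds 0) := by
      have := (Real.tendsto_exp_neg_atTop_nhds_zero).comp tendsto_natCast_atTop_atTop (α := ℕ)
      simpa using this.const_mul (Real.exp s)
    have := (ENNReal.tendsto_ofReal h1)
    simpa using this
  have : P {ω | ∀ m : ℕ, S ω (m : ℝ) < s} ≤ 0 :=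
    ge_of_tendsto htend (Eventually.of_forall hbound)
  exact le_antisymm this bot_le

end Subordinator

section CDF

variable {Ω : Type*} [MeasurableSpace Ω] {P : Measure Ω} {β : ℝ} {S : Ω → ℝ → ℝ}

lemma cdf_invProc [IsProbabilityMeasure P] (hS : IsStableSubordinator β P S)
    {k : ℕ} (s u : Fin k → ℝ) (hu : ∀ j, 0 ≤ u j) :
    P {ω | ∀ j, invProc S ω (s j) ≤ u j} = P {ω | ∀ j, s j ≤ S ω (u j)} := by
  set N : Set Ω := ⋃ j : Fin k, {ω | ∀ n : ℕ, S ω (n : ℝ) < s j} with hN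
  have hNnull : P N = 0 :=
    measure_iUnion_null fun j => null_of_bounded hS (s j)
  have hae : ∀ᵐ ω ∂P, ω ∉ N := by
    rw [ae_iff]
    simpa [not_not] using hNnull
  apply measure_congr
  filter_upwards [hae] with ω hω
  have hiff : ∀ j, invProc S ω (s j) ≤ u j ↔ s j ≤ S ω (u j) := by
    intro j
    have hne : {v : ℝ | 0 ≤ v ∧ s j ≤ S ω v}.Nonempty := by
      rw [invProc_nonempty_iff (hS.mono ω)]
      by_contra hcon
      push_neg at hcon
      exact hω (Set.mem_iUnion.mpr ⟨j, fun n => hcon n⟩)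
    exact invProc_le_iff (hS.mono ω) (hS.rightCont ω (u j)) hne (hu j)
  show (ω ∈ {ω | ∀ j, invProc S ω (s j) ≤ u j}) = (ω ∈ {ω | ∀ j, s j ≤ S ω (u j)})
  simp only [Set.mem_setOf_eq, eq_iff_iff]
  exact forall_congr' hiff

/-- Two nonnegative random variables whose Laplace transforms agree at all natural
numbers have the same law. -/
lemma map_eq_of_laplace [IsProbabilityMeasure P] {X Y : Ω → ℝ}
    (hX : Measurable X) (hY : Measurable Y) (hX0 : ∀ ω, 0 ≤ X ω) (hY0 : ∀ ω, 0 ≤ Y ω)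
    (hL : ∀ n : ℕ, ∫ ω, Real.exp (-(n : ℝ) * X ω) ∂P = ∫ ω, Real.exp (-(n : ℝ) * Y ω) ∂P) :
    P.map X = P.map Y := by
  have hmem : ∀ (Z : Ω → ℝ), (∀ ω, 0 ≤ Z ω) → ∀ ω, Real.exp (-Z ω) ∈ Set.Icc (0:ℝ) 1 :=
    fun Z hZ ω => ⟨(Real.exp_pos _).le, Real.exp_le_one_iff.mpr (neg_nonpos.mpr (hZ ω))⟩
  have hint : ∀ {Z : Ω → ℝ}, Measurable Z → (∀ ω, 0 ≤ Z ω) → ∀ {f : ℝ → ℝ}, Continuous f →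
      Integrable (fun ω => f (Real.exp (-Z ω))) P := by
    intro Z hZ hZ0 f hf
    obtain ⟨C, hC⟩ := (isCompact_Icc (a := (0:ℝ)) (b := 1)).exists_bound_of_continuousOn
      hf.continuousOn
    exact Integrable.mono' (integrable_const C)
      ((hf.measurable.comp (hZ.neg.exp)).aestronglyMeasurable)
      (ae_of_all _ fun ω => hC _ (hmem Z hZ0 ω))
  -- moments
  have hpow : ∀ (Z : Ω → ℝ) (i : ℕ) (ω : Ω),
      Real.exp (-Z ω) ^ i = Real.exp (-(i : ℝ) * Z ω) := by
    intro Z i ω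
    rw [← Real.exp_nat_mul]
    ring_nf
  -- polynomials
  have hpoly : ∀ p : Polynomial ℝ,
      ∫ ω, p.eval (Real.exp (-X ω)) ∂P = ∫ ω, p.eval (Real.exp (-Y ω)) ∂P := by
    intro p
    have hexpand : ∀ (Z : Ω → ℝ), Measurable Z → (∀ ω, 0 ≤ Z ω) →
        ∫ ω, p.eval (Real.exp (-Z ω)) ∂P
          = ∑ i ∈ Finset.range (p.natDegree + 1),
              p.coeff i * ∫ ω, Real.exp (-(i : ℝ) * Z ω) ∂P := by
      intro Z hZ hZ0
      have h1 : ∀ ω, p.eval (Real.exp (-Z ω))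
          = ∑ i ∈ Finset.range (p.natDegree + 1),
              p.coeff i * Real.exp (-(i : ℝ) * Z ω) := by
        intro ω
        rw [Polynomial.eval_eq_sum_range]
        exact Finset.sum_congr rfl fun i _ => by rw [hpow]
      simp_rw [h1]
      rw [integral_finset_sum]
      · refine Finset.sum_congr rfl fun i _ => ?_
        rw [integral_const_mul]
      · intro i _
        have : Integrable (fun ω => (Real.exp (-Z ω)) ^ i) P := hint hZ hZ0 (continuous_pow i)
        simp_rw [hpow Z i] at this
        exact this.const_mul _
    rw [hexpand X hX hX0, hexpand Y hY hY0]
    exact Finset.sum_congr rfl fun i _ => by rw [hL i]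
  -- continuous functions
  have hcont : ∀ f : ℝ → ℝ, Continuous f →
      ∫ ω, f (Real.exp (-X ω)) ∂P = ∫ ω, f (Real.exp (-Y ω)) ∂P := by
    intro f hf
    have hkey : ∀ ε : ℝ, 0 < ε →
        |∫ ω, f (Real.exp (-X ω)) ∂P - ∫ ω, f (Real.exp (-Y ω)) ∂P| ≤ 2 * ε := by
      intro ε hε
      obtain ⟨p, hp⟩ := exists_polynomial_near_of_continuousOn 0 1 f hf.continuousOn ε hε
      have hbound : ∀ (Z : Ω → ℝ), Measurable Z → (∀ ω, 0 ≤ Z ω) →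
          |∫ ω, f (Real.exp (-Z ω)) ∂P - ∫ ω, p.eval (Real.exp (-Z ω)) ∂P| ≤ ε := by
        intro Z hZ hZ0
        have hi1 : Integrable (fun ω => f (Real.exp (-Z ω))) P := hint hZ hZ0 hf
        have hi2 : Integrable (fun ω => p.eval (Real.exp (-Z ω))) P :=
          hint hZ hZ0 p.continuous
        rw [← integral_sub hi1 hi2]
        calc |∫ ω, (f (Real.exp (-Z ω)) - p.eval (Real.exp (-Z ω))) ∂P|
            ≤ ∫ ω, |f (Real.exp (-Z ω)) - p.eval (Real.exp (-Z ω))| ∂P := by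
              rw [← Real.norm_eq_abs]
              simpa [Real.norm_eq_abs] using
                norm_integral_le_integral_norm
                  (fun ω => f (Real.exp (-Z ω)) - p.eval (Real.exp (-Z ω))) (μ := P)
          _ ≤ ∫ _ω, ε ∂P := by
              refine integral_mono (hi1.sub hi2).abs (integrable_const ε) fun ω => ?_
              rw [abs_sub_comm]
              exact (hp _ (hmem Z hZ0 ω)).le
          _ = ε := by simp
      calc |∫ ω, f (Real.exp (-X ω)) ∂P - ∫ ω, f (Real.exp (-Y ω)) ∂P|
          ≤ |∫ ω, f (Real.exp (-X ω)) ∂P - ∫ ω, p.eval (Real.exp (-X ω)) ∂P|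
            + |∫ ω, p.eval (Real.exp (-X ω)) ∂P - ∫ ω, f (Real.exp (-Y ω)) ∂P| :=
            abs_sub_le _ _ _
        _ = |∫ ω, f (Real.exp (-X ω)) ∂P - ∫ ω, p.eval (Real.exp (-X ω)) ∂P|
            + |∫ ω, p.eval (Real.exp (-Y ω)) ∂P - ∫ ω, f (Real.exp (-Y ω)) ∂P| := by
            rw [hpoly p]
        _ ≤ ε + ε := add_le_add (hbound X hX hX0) (by rw [abs_sub_comm]; exact hbound Y hY hY0)
        _ = 2 * ε := by ring
    have : |∫ ω, f (Real.exp (-X ω)) ∂P - ∫ ω, f (Real.exp (-Y ω)) ∂P| ≤ 0 := by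
      by_contra hcon
      push_neg at hcon
      have := hkey (|∫ ω, f (Real.exp (-X ω)) ∂P - ∫ ω, f (Real.exp (-Y ω)) ∂P| / 4)
        (by linarith)
      linarith
    have := abs_nonpos_iff.mp this
    linarith [sub_eq_zero.mp this, le_of_eq (sub_eq_zero.mp this)]
  -- CDFs
  have hcdf : ∀ a : ℝ, P {ω | X ω ≤ a} = P {ω | Y ω ≤ a} := by
    intro a
    set b := Real.exp (-a) with hb
    set F : ℕ → ℝ → ℝ := fun m y => min 1 (max 0 ((m : ℝ) * (y - b) + 1)) with hF
    have hFc : ∀ m, Continuous (F m) :=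
      fun m => continuous_const.min
        (continuous_const.max ((continuous_const.mul (continuous_id.sub continuous_const)).add
          continuous_const))
    have hF01 : ∀ m y, 0 ≤ F m y ∧ F m y ≤ 1 := by
      intro m y
      constructor
      · exact le_min zero_le_one (le_max_left _ _)
      · exact min_le_left _ _
    have hlim : ∀ (Z : Ω → ℝ), ∀ ω, Tendsto (fun m : ℕ => F m (Real.exp (-Z ω))) atTop
        (nhds (if Z ω ≤ a then (1:ℝ) else 0)) := by
      intro Z ω
      by_cases h : Z ω ≤ a
      · have hby : b ≤ Real.exp (-Z ω) := Real.exp_le_exp.mpr (by linarith)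
        have : ∀ m : ℕ, F m (Real.exp (-Z ω)) = 1 := by
          intro m
          have h1 : (1:ℝ) ≤ (m : ℝ) * (Real.exp (-Z ω) - b) + 1 := by nlinarith [Nat.cast_nonneg (α := ℝ) m]
          rw [hF]
          simp only []
          rw [max_eq_right (by linarith), min_eq_left h1]
        simp only [if_pos h]
        simp_rw [this]
        exact tendsto_const_nhds
      · have hby : Real.exp (-Z ω) < b := by
          rw [hb]
          exact Real.exp_lt_exp.mpr (by push_neg at h; linarith)
        have hev : ∀ᶠ m : ℕ in atTop, F m (Real.exp (-Z ω)) = 0 := by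
          obtain ⟨M, hM⟩ := exists_nat_ge ((b - Real.exp (-Z ω))⁻¹)
          refine eventually_atTop.mpr ⟨M, fun m hm => ?_⟩
          have hpos : 0 < b - Real.exp (-Z ω) := by linarith
          have hmM : ((b - Real.exp (-Z ω))⁻¹ : ℝ) ≤ (m : ℝ) := hM.trans (by exact_mod_cast hm)
          have h1 : (1:ℝ) ≤ (m:ℝ) * (b - Real.exp (-Z ω)) := by
            rw [← inv_mul_cancel₀ hpos.ne']
            exact mul_le_mul_of_nonneg_right hmM hpos.le
          have h2 : (m : ℝ) * (Real.exp (-Z ω) - b) + 1 ≤ 0 := by nlinarith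
          rw [hF]
          simp only []
          rw [max_eq_left h2, min_eq_right zero_le_one]
        simp only [if_neg h]
        exact Tendsto.congr' (hev.mono fun m hm => hm.symm) tendsto_const_nhds
    have hDCT : ∀ (Z : Ω → ℝ), Measurable Z → (∀ ω, 0 ≤ Z ω) →
        Tendsto (fun m : ℕ => ∫ ω, F m (Real.exp (-Z ω)) ∂P) atTop
          (nhds ((P {ω | Z ω ≤ a}).toReal)) := by
      intro Z hZ hZ0
      have hmeasset : MeasurableSet {ω | Z ω ≤ a} := measurableSet_le hZ measurable_const
      have hieq : ∫ ω, (if Z ω ≤ a then (1:ℝ) else 0) ∂P = (P {ω | Z ω ≤ a}).toReal := by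
        have : (fun ω => (if Z ω ≤ a then (1:ℝ) else 0))
            = Set.indicator {ω | Z ω ≤ a} (fun _ => (1:ℝ)) := by
          funext ω
          rw [Set.indicator_apply]
          rfl
        rw [this, integral_indicator_const (1:ℝ) hmeasset]
        simp [measureReal_def]
      rw [← hieq]
      exact tendsto_integral_of_dominated_convergence (fun _ => (1:ℝ))
        (fun m => ((hFc m).measurable.comp (hZ.neg.exp)).aestronglyMeasurable)
        (integrable_const 1)
        (fun m => ae_of_all _ fun ω => by
          rw [Real.norm_eq_abs, abs_of_nonneg (hF01 m _).1]
          exact (hF01 m _).2)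
        (ae_of_all _ fun ω => hlim Z ω)
    have heqm : ∀ m : ℕ, ∫ ω, F m (Real.exp (-X ω)) ∂P = ∫ ω, F m (Real.exp (-Y ω)) ∂P :=
      fun m => hcont (F m) (hFc m)
    have h1 := hDCT X hX hX0
    have h2 := hDCT Y hY hY0
    rw [show (fun m : ℕ => ∫ ω, F m (Real.exp (-X ω)) ∂P)
        = (fun m : ℕ => ∫ ω, F m (Real.exp (-Y ω)) ∂P) from funext heqm] at h1
    have := tendsto_nhds_unique h1 h2
    exact (ENNReal.toReal_eq_toReal_iff' (measure_ne_top P _) (measure_ne_top P _)).mp this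
  haveI : IsProbabilityMeasure (P.map X) := Measure.isProbabilityMeasure_map hX.aemeasurable
  refine Measure.ext_of_Iic (P.map X) (P.map Y) fun a => ?_
  rw [Measure.map_apply hX measurableSet_Iic, Measure.map_apply hY measurableSet_Iic]
  exact hcdf a

end CDF

section PiExt

/-- finite measures on `Fin k → ℝ` agreeing on all lower rectangles agree. -/
lemma ext_pi_Iic {k : ℕ} (μ ν : Measure (Fin k → ℝ)) [IsProbabilityMeasure μ]
    [IsProbabilityMeasure ν]
    (h : ∀ u : Fin k → ℝ, μ (Set.pi Set.univ fun j => Set.Iic (u j))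
      = ν (Set.pi Set.univ fun j => Set.Iic (u j))) : μ = ν := by
  have hgen : (inferInstance : MeasurableSpace (Fin k → ℝ)) = MeasurableSpace.generateFrom
      (Set.pi Set.univ '' Set.pi Set.univ fun _ : Fin k => Set.range (Set.Iic (α := ℝ))) := by
    refine (generateFrom_eq_pi (fun _ => ?_) (fun _ => ?_)).symm
    · rw [BorelSpace.measurable_eq (α := ℝ)]
      exact (borel_eq_generateFrom_Iic ℝ).symm
    · refine ⟨fun n => Set.Iic (n : ℝ), fun n => ⟨n, rfl⟩, ?_⟩
      ext x
      simp only [Set.mem_iUnion, Set.mem_Iic, Set.mem_univ, iff_true]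
      exact exists_nat_ge x
  refine ext_of_generate_finite _ hgen (IsPiSystem.pi fun _ => ?_) ?_ (by simp)
  · rintro _ ⟨a, rfl⟩ _ ⟨b, rfl⟩ -
    exact ⟨a ⊓ b, Set.Iic_inter_Iic.symm⟩
  · rintro s ⟨s', hs', rfl⟩
    have hch : ∀ j : Fin k, ∃ a : ℝ, s' j = Set.Iic a := by
      intro j
      obtain ⟨a, ha⟩ := hs' j (Set.mem_univ j)
      exact ⟨a, ha.symm⟩
    choose a ha using hch
    have : Set.pi Set.univ s' = Set.pi Set.univ fun j => Set.Iic (a j) :=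
      Set.pi_congr rfl fun j _ => ha j
    rw [this]
    exact h a

end PiExt

section Laws

variable {Ω : Type*} [MeasurableSpace Ω] {P : Measure Ω} {β : ℝ} {S₁ S₂ : Ω → ℝ → ℝ}

lemma map_S_sorted [IsProbabilityMeasure P] (hS₁ : IsStableSubordinator β P S₁)
    (hS₂ : IsStableSubordinator β P S₂) (n : ℕ) (v : Fin (n + 1) → ℝ)
    (hv : Monotone v) (hv0 : v 0 = 0) :
    P.map (fun ω => fun i => S₁ ω (v i)) = P.map (fun ω => fun i => S₂ ω (v i)) := by
  have hvnn : ∀ i, 0 ≤ v i := fun i => hv0 ▸ hv (Fin.zero_le i)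
  have hvle : ∀ l : Fin n, v l.castSucc ≤ v l.succ :=
    fun l => hv (by simp [Fin.le_def])
  -- partial-sum reconstruction map
  set Ψ : (Fin n → ℝ) → (Fin (n + 1) → ℝ) := fun x i =>
    ∑ l ∈ Finset.univ.filter (fun l : Fin n => (l : ℕ) < (i : ℕ)), x l with hΨ
  have hΨm : Measurable Ψ :=
    measurable_pi_lambda _ fun i => Finset.measurable_sum _ fun l _ => measurable_pi_apply l
  have key : ∀ (S : Ω → ℝ → ℝ), (∀ ω, S ω 0 = 0) → ∀ ω,
      (fun i => S ω (v i)) = Ψ (fun l => S ω (v l.succ) - S ω (v l.castSucc)) := by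
    intro S hz ω
    funext i
    induction i using Fin.induction with
    | zero =>
        simp only [hΨ]
        rw [hv0, hz ω]
        rw [Finset.filter_false_of_mem, Finset.sum_empty]
        intro l _
        simp
    | succ i ih =>
        have hfilter : Finset.univ.filter (fun l : Fin n => (l : ℕ) < ((i.succ : Fin (n+1)) : ℕ))
            = insert i (Finset.univ.filter
                (fun l : Fin n => (l : ℕ) < ((i.castSucc : Fin (n+1)) : ℕ))) := by
          ext l
          simp only [Finset.mem_filter, Finset.mem_univ, true_and, Finset.mem_insert,
            Fin.val_succ, Fin.coe_castSucc]
          constructor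
          · intro hl
            rcases Nat.lt_succ_iff_lt_or_eq.mp hl with h | h
            · exact Or.inr h
            · exact Or.inl (Fin.ext h)
          · rintro (rfl | hl)
            · exact Nat.lt_succ_self _
            · exact hl.trans (Nat.lt_succ_self _)
        simp only [hΨ] at ih ⊢
        rw [hfilter, Finset.sum_insert (by simp), ← ih]
        ring
  have hXm : Measurable (fun ω (l : Fin n) => S₁ ω (v l.succ) - S₁ ω (v l.castSucc)) :=
    measurable_pi_lambda _ fun l => (hS₁.meas _).sub (hS₁.meas _)
  have hYm : Measurable (fun ω (l : Fin n) => S₂ ω (v l.succ) - S₂ ω (v l.castSucc)) :=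
    measurable_pi_lambda _ fun l => (hS₂.meas _).sub (hS₂.meas _)
  -- joint law of increments is the product of marginals
  have hpi : ∀ (S : Ω → ℝ → ℝ), IsStableSubordinator β P S →
      P.map (fun ω (l : Fin n) => S ω (v l.succ) - S ω (v l.castSucc))
        = Measure.pi (fun l : Fin n =>
            P.map (fun ω => S ω (v l.succ) - S ω (v l.castSucc))) := by
    intro S hS
    have hm : ∀ l : Fin n, Measurable (fun ω => S ω (v l.succ) - S ω (v l.castSucc)) :=
      fun l => (hS.meas _).sub (hS.meas _)
    have hvecm : Measurable (fun ω (l : Fin n) => S ω (v l.succ) - S ω (v l.castSucc)) :=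
      measurable_pi_lambda _ fun l => hm l
    haveI : ∀ l : Fin n, IsProbabilityMeasure
        (P.map (fun ω => S ω (v l.succ) - S ω (v l.castSucc))) :=
      fun l => Measure.isProbabilityMeasure_map (hm l).aemeasurable
    haveI : ∀ l : Fin n, SigmaFinite
        (P.map (fun ω => S ω (v l.succ) - S ω (v l.castSucc))) := fun l => inferInstance
    refine (Measure.pi_eq fun s hs => ?_).symm
    rw [Measure.map_apply hvecm (MeasurableSet.univ_pi hs)]
    have hind := (hS.indep n v hv (hv0 ▸ le_rfl)).measure_inter_preimage_eq_mul
      Finset.univ (sets := s) (fun l _ => hs l)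
    have hpre : (fun ω (l : Fin n) => S ω (v l.succ) - S ω (v l.castSucc)) ⁻¹'
        (Set.pi Set.univ s)
        = ⋂ l ∈ (Finset.univ : Finset (Fin n)),
            (fun ω => S ω (v l.succ) - S ω (v l.castSucc)) ⁻¹' (s l) := by
      ext ω
      simp [Set.mem_pi]
    rw [hpre, hind]
    exact Finset.prod_congr rfl fun l _ => (Measure.map_apply (hm l) (hs l)).symm
  -- marginals agree by Laplace uniqueness
  have hmarg : ∀ l : Fin n,
      P.map (fun ω => S₁ ω (v l.succ) - S₁ ω (v l.castSucc))
        = P.map (fun ω => S₂ ω (v l.succ) - S₂ ω (v l.castSucc)) := by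
    intro l
    refine map_eq_of_laplace ((hS₁.meas _).sub (hS₁.meas _)) ((hS₂.meas _).sub (hS₂.meas _))
      (fun ω => sub_nonneg.mpr (hS₁.mono ω (hvle l)))
      (fun ω => sub_nonneg.mpr (hS₂.mono ω (hvle l))) (fun m => ?_)
    have h1 := hS₁.laplace m (Nat.cast_nonneg m) (v l.castSucc) (v l.succ)
      (hvnn _) (hvle l)
    have h2 := hS₂.laplace m (Nat.cast_nonneg m) (v l.castSucc) (v l.succ)
      (hvnn _) (hvle l)
    calc ∫ ω, Real.exp (-(m : ℝ) * (S₁ ω (v l.succ) - S₁ ω (v l.castSucc))) ∂P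
        = Real.exp (-(v l.succ - v l.castSucc) * (m : ℝ) ^ β) := h1
      _ = ∫ ω, Real.exp (-(m : ℝ) * (S₂ ω (v l.succ) - S₂ ω (v l.castSucc))) ∂P := h2.symm
  -- assemble
  have e1 : P.map (fun ω => fun i => S₁ ω (v i))
      = (P.map (fun ω (l : Fin n) => S₁ ω (v l.succ) - S₁ ω (v l.castSucc))).map Ψ := by
    rw [Measure.map_map hΨm hXm]
    congr 1
    funext ω
    exact key S₁ hS₁.zero ω
  have e2 : P.map (fun ω => fun i => S₂ ω (v i))
      = (P.map (fun ω (l : Fin n) => S₂ ω (v l.succ) - S₂ ω (v l.castSucc))).map Ψ := by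
    rw [Measure.map_map hΨm hYm]
    congr 1
    funext ω
    exact key S₂ hS₂.zero ω
  rw [e1, e2, hpi S₁ hS₁, hpi S₂ hS₂, congrArg Measure.pi (funext hmarg)]

end Laws

section Laws2

variable {Ω : Type*} [MeasurableSpace Ω] {P : Measure Ω} {β : ℝ} {S₁ S₂ : Ω → ℝ → ℝ}

lemma map_S_vec [IsProbabilityMeasure P] (hS₁ : IsStableSubordinator β P S₁)
    (hS₂ : IsStableSubordinator β P S₂) {k : ℕ} (u : Fin k → ℝ) (hu : ∀ j, 0 ≤ u j) :
    P.map (fun ω => fun j => S₁ ω (u j)) = P.map (fun ω => fun j => S₂ ω (u j)) := by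
  classical
  set F : Finset ℝ := insert 0 (Finset.image u Finset.univ) with hFdef
  have h0F : (0 : ℝ) ∈ F := Finset.mem_insert_self _ _
  set n : ℕ := F.card - 1 with hn
  have hcard : F.card = n + 1 := (Nat.succ_pred_eq_of_pos (Finset.card_pos.mpr ⟨0, h0F⟩)).symm
  set e := F.orderIsoOfFin hcard with he
  set v : Fin (n + 1) → ℝ := fun i => (e i : ℝ) with hv
  have hvmono : Monotone v := fun i j hij => by
    have := e.monotone hij
    exact_mod_cast this
  have hvF : ∀ i, v i ∈ F := fun i => (e i).2
  have hvnn : ∀ i, 0 ≤ v i := by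
    intro i
    rcases Finset.mem_insert.mp (hvF i) with h | h
    · exact le_of_eq h.symm
    · obtain ⟨j, -, hj⟩ := Finset.mem_image.mp h
      exact hj ▸ hu j
  have hv0 : v 0 = 0 := by
    have hi0 : (e (e.symm ⟨0, h0F⟩) : ℝ) = 0 := by simp
    have h1 : v 0 ≤ v (e.symm ⟨0, h0F⟩) := hvmono (Fin.zero_le _)
    rw [hv] at h1 ⊢
    simp only at h1
    rw [hi0] at h1
    exact le_antisymm h1 (hvnn 0)
  have hmem : ∀ j, u j ∈ F :=
    fun j => Finset.mem_insert_of_mem (Finset.mem_image_of_mem u (Finset.mem_univ j))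
  set φ : Fin k → Fin (n + 1) := fun j => e.symm ⟨u j, hmem j⟩ with hφ
  have hvφ : ∀ j, v (φ j) = u j := by
    intro j
    rw [hv, hφ]
    simp
  have hre : Measurable (fun (y : Fin (n + 1) → ℝ) (j : Fin k) => y (φ j)) :=
    measurable_pi_lambda _ fun j => measurable_pi_apply _
  have hm₁ : Measurable (fun ω (i : Fin (n + 1)) => S₁ ω (v i)) :=
    measurable_pi_lambda _ fun i => hS₁.meas _
  have hm₂ : Measurable (fun ω (i : Fin (n + 1)) => S₂ ω (v i)) :=
    measurable_pi_lambda _ fun i => hS₂.meas _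
  have hc₁ : ((fun (y : Fin (n + 1) → ℝ) (j : Fin k) => y (φ j))
      ∘ (fun ω (i : Fin (n + 1)) => S₁ ω (v i))) = fun ω j => S₁ ω (u j) := by
    funext ω j
    simp [Function.comp, hvφ j]
  have hc₂ : ((fun (y : Fin (n + 1) → ℝ) (j : Fin k) => y (φ j))
      ∘ (fun ω (i : Fin (n + 1)) => S₂ ω (v i))) = fun ω j => S₂ ω (u j) := by
    funext ω j
    simp [Function.comp, hvφ j]
  calc P.map (fun ω => fun j => S₁ ω (u j))
      = (P.map (fun ω (i : Fin (n + 1)) => S₁ ω (v i))).map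
          (fun y j => y (φ j)) := by rw [Measure.map_map hre hm₁, hc₁]
    _ = (P.map (fun ω (i : Fin (n + 1)) => S₂ ω (v i))).map
          (fun y j => y (φ j)) := by rw [map_S_sorted hS₁ hS₂ n v hvmono hv0]
    _ = P.map (fun ω => fun j => S₂ ω (u j)) := by rw [Measure.map_map hre hm₂, hc₂]

lemma map_invProc_eq [IsProbabilityMeasure P] (hS₁ : IsStableSubordinator β P S₁)
    (hS₂ : IsStableSubordinator β P S₂) {k : ℕ} (s : Fin k → ℝ) :
    P.map (fun ω => fun j => invProc S₁ ω (s j))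
      = P.map (fun ω => fun j => invProc S₂ ω (s j)) := by
  have hm₁ : Measurable (fun ω => fun j => invProc S₁ ω (s j)) :=
    measurable_pi_lambda _ fun j => measurable_invProc hS₁ (s j)
  have hm₂ : Measurable (fun ω => fun j => invProc S₂ ω (s j)) :=
    measurable_pi_lambda _ fun j => measurable_invProc hS₂ (s j)
  haveI : IsProbabilityMeasure (P.map (fun ω => fun j => invProc S₁ ω (s j))) :=
    Measure.isProbabilityMeasure_map hm₁.aemeasurable
  haveI : IsProbabilityMeasure (P.map (fun ω => fun j => invProc S₂ ω (s j))) :=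
    Measure.isProbabilityMeasure_map hm₂.aemeasurable
  refine ext_pi_Iic _ _ fun u => ?_
  rw [Measure.map_apply hm₁ (MeasurableSet.univ_pi fun j => measurableSet_Iic),
    Measure.map_apply hm₂ (MeasurableSet.univ_pi fun j => measurableSet_Iic)]
  by_cases hu : ∀ j, 0 ≤ u j
  · have hset₁ : (fun ω => fun j => invProc S₁ ω (s j)) ⁻¹'
        (Set.pi Set.univ fun j => Set.Iic (u j)) = {ω | ∀ j, invProc S₁ ω (s j) ≤ u j} := by
      ext ω; simp [Set.mem_pi, Pi.le_def]
    have hset₂ : (fun ω => fun j => invProc S₂ ω (s j)) ⁻¹'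
        (Set.pi Set.univ fun j => Set.Iic (u j)) = {ω | ∀ j, invProc S₂ ω (s j) ≤ u j} := by
      ext ω; simp [Set.mem_pi, Pi.le_def]
    rw [hset₁, hset₂, cdf_invProc hS₁ s u hu, cdf_invProc hS₂ s u hu]
    -- transfer through the law of the S-vector
    have hmap := map_S_vec hS₁ hS₂ u hu
    have hA : MeasurableSet {x : Fin k → ℝ | ∀ j, s j ≤ x j} := by
      have : {x : Fin k → ℝ | ∀ j, s j ≤ x j}
          = Set.pi Set.univ fun j => Set.Ici (s j) := by
        ext x; simp [Set.mem_pi, Pi.le_def]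
      rw [this]
      exact MeasurableSet.univ_pi fun j => measurableSet_Ici
    have hmv₁ : Measurable (fun ω => fun j => S₁ ω (u j)) :=
      measurable_pi_lambda _ fun j => hS₁.meas _
    have hmv₂ : Measurable (fun ω => fun j => S₂ ω (u j)) :=
      measurable_pi_lambda _ fun j => hS₂.meas _
    have h1 := congrArg (fun μ : Measure (Fin k → ℝ) => μ {x | ∀ j, s j ≤ x j}) hmap
    simp only [Measure.map_apply hmv₁ hA, Measure.map_apply hmv₂ hA] at h1
    have hp₁ : (fun ω => fun j => S₁ ω (u j)) ⁻¹' {x | ∀ j, s j ≤ x j}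
        = {ω | ∀ j, s j ≤ S₁ ω (u j)} := rfl
    have hp₂ : (fun ω => fun j => S₂ ω (u j)) ⁻¹' {x | ∀ j, s j ≤ x j}
        = {ω | ∀ j, s j ≤ S₂ ω (u j)} := rfl
    rw [hp₁, hp₂] at h1
    exact h1
  · push_neg at hu
    obtain ⟨j₀, hj₀⟩ := hu
    have hempty : ∀ (S : Ω → ℝ → ℝ), (fun ω => fun j => invProc S ω (s j)) ⁻¹'
        (Set.pi Set.univ fun j => Set.Iic (u j)) = (∅ : Set Ω) := by
      intro S
      rw [Set.eq_empty_iff_forall_notMem]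
      intro ω hω
      have := (Set.mem_pi.mp hω) j₀ (Set.mem_univ j₀)
      exact absurd (le_trans (invProc_nonneg S ω (s j₀)) this) (not_le.mpr hj₀)
    rw [hempty S₁, hempty S₂]

end Laws2

section Scaling

variable {Ω : Type*} [MeasurableSpace Ω] {P : Measure Ω} {β : ℝ} {S : Ω → ℝ → ℝ}

lemma isStableSubordinator_scaled (hS : IsStableSubordinator β P S)
    {c : ℝ} (hc : 0 < c) (hβ0 : 0 < β) :
    IsStableSubordinator β P (fun ω u => c⁻¹ * S ω (c ^ β * u)) := by
  have hr : 0 < c ^ β := Real.rpow_pos_of_pos hc β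
  constructor
  · intro ω
    simp [hS.zero ω]
  · intro ω a b hab
    have := hS.mono ω (mul_le_mul_of_nonneg_left hab hr.le)
    exact mul_le_mul_of_nonneg_left this (inv_nonneg.mpr hc.le)
  · intro ω u
    have h1 : ContinuousWithinAt (fun w => c ^ β * w) (Set.Ici u) u :=
      (continuous_const.mul continuous_id).continuousWithinAt
    have h2 : ContinuousWithinAt (S ω) (Set.Ici (c ^ β * u)) (c ^ β * u) :=
      hS.rightCont ω (c ^ β * u)
    have h3 : Set.MapsTo (fun w => c ^ β * w) (Set.Ici u) (Set.Ici (c ^ β * u)) :=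
      fun w hw => mul_le_mul_of_nonneg_left hw hr.le
    exact ((h2.comp h1 h3).const_smul c⁻¹ : )
  · intro u
    exact (hS.meas _).const_mul _
  · intro n t ht ht0
    have hind := hS.indep n (fun i => c ^ β * t i)
      (fun i j hij => mul_le_mul_of_nonneg_left (ht hij) hr.le)
      (by positivity)
    have := hind.comp (fun _ x => c⁻¹ * x) (fun _ => measurable_const_mul _)
    convert this using 2 with i
    funext ω
    simp only [Function.comp_apply]
    ring
  · intro θ hθ v u hv hvu
    have heq : ∀ ω, Real.exp (-θ * (c⁻¹ * S ω (c ^ β * u) - c⁻¹ * S ω (c ^ β * v)))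
        = Real.exp (-(θ / c) * (S ω (c ^ β * u) - S ω (c ^ β * v))) := by
      intro ω
      congr 1
      rw [div_eq_mul_inv]
      ring
    rw [show (fun ω => Real.exp (-θ * (c⁻¹ * S ω (c ^ β * u) - c⁻¹ * S ω (c ^ β * v))))
      = fun ω => Real.exp (-(θ / c) * (S ω (c ^ β * u) - S ω (c ^ β * v))) from funext heq]
    rw [hS.laplace (θ / c) (div_nonneg hθ hc.le) (c ^ β * v) (c ^ β * u)
      (by positivity) (mul_le_mul_of_nonneg_left hvu hr.le)]
    congr 1
    rw [Real.div_rpow hθ hc.le]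
    have : c ^ β * u - c ^ β * v = c ^ β * (u - v) := by ring
    rw [this]
    field_simp

/-- substitution `x = c * y` in a lower‐tail Lebesgue integral; valid for arbitrary
functions since scaling is a measurable equivalence. -/
lemma lintegral_Ioi_scale (g : ℝ → ℝ≥0∞) {c : ℝ} (hc : 0 < c) :
    ∫⁻ x in Set.Ioi (0 : ℝ), g x
      = ENNReal.ofReal c * ∫⁻ y in Set.Ioi (0 : ℝ), g (c * y) := by
  have hvol : (volume : Measure ℝ)
      = ENNReal.ofReal c • Measure.map (fun y : ℝ => c * y) volume := by
    rw [Real.map_volume_mul_left hc.ne', smul_smul, abs_of_pos (inv_pos.mpr hc),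
      ← ENNReal.ofReal_mul hc.le, mul_inv_cancel₀ hc.ne', ENNReal.ofReal_one, one_smul]
  set e : ℝ ≃ᵐ ℝ := (Homeomorph.mulLeft₀ c hc.ne').toMeasurableEquiv with he
  have hecoe : (e : ℝ → ℝ) = fun y => c * y := rfl
  have hind : ∀ a : ℝ, Set.indicator (Set.Ioi (0:ℝ)) g (c * a)
      = Set.indicator (Set.Ioi (0:ℝ)) (fun y => g (c * y)) a := by
    intro a
    by_cases ha : 0 < a
    · rw [Set.indicator_of_mem (by exact mul_pos hc ha) g,
        Set.indicator_of_mem (Set.mem_Ioi.mpr ha)]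
    · rw [Set.indicator_of_notMem, Set.indicator_of_notMem (by simpa using ha)]
      simp only [Set.mem_Ioi, not_lt] at ha ⊢
      exact mul_nonpos_of_nonneg_of_nonpos hc.le ha
  calc ∫⁻ x in Set.Ioi (0:ℝ), g x
      = ∫⁻ x, Set.indicator (Set.Ioi 0) g x ∂volume := (lintegral_indicator measurableSet_Ioi g).symm
    _ = ENNReal.ofReal c * ∫⁻ x, Set.indicator (Set.Ioi 0) g x
          ∂(Measure.map (fun y : ℝ => c * y) volume) := by
        conv_lhs => rw [hvol]
        rw [lintegral_smul_measure, smul_eq_mul]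
    _ = ENNReal.ofReal c * ∫⁻ a, Set.indicator (Set.Ioi 0) g (c * a) ∂volume := by
        congr 1
        rw [show Measure.map (fun y : ℝ => c * y) volume = Measure.map e volume by rw [hecoe]]
        exact lintegral_map_equiv (fun x => Set.indicator (Set.Ioi 0) g x) e
    _ = ENNReal.ofReal c * ∫⁻ a, Set.indicator (Set.Ioi 0) (fun y => g (c * y)) a ∂volume := by
        congr 1
        exact lintegral_congr hind
    _ = ENNReal.ofReal c * ∫⁻ y in Set.Ioi (0:ℝ), g (c * y) := by
        rw [lintegral_indicator measurableSet_Ioi]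

end Scaling

/-- Self-similarity (with exponent `H = β + (1-β)/α`) of the β-Mittag-Leffler
fractional SαS motion, expressed through its finite-dimensional characteristic
functional. -/
theorem mittagLeffler_fractional_SaS_self_similar
    {Ω : Type*} [MeasurableSpace Ω] (P : Measure Ω) [IsProbabilityMeasure P]
    (α β : ℝ) (hα0 : 0 < α) (hα2 : α < 2) (hβ0 : 0 < β) (hβ1 : β < 1)
    (S : Ω → ℝ → ℝ) (hS : IsStableSubordinator β P S)
    (c : ℝ) (hc : 0 < c) (k : ℕ) (hk : 1 ≤ k)
    (t : Fin k → ℝ) (ht : ∀ j, 0 ≤ t j) (θ : Fin k → ℝ) :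
    ∫⁻ x in Set.Ioi (0 : ℝ),
        (∫⁻ ω, ENNReal.ofReal
            (|∑ j, θ j * invProc S ω (max (c * t j - x) 0)| ^ α) ∂P)
          * ENNReal.ofReal ((1 - β) * x ^ (-β))
      = ENNReal.ofReal (c ^ (α * (β + (1 - β) / α))) *
        ∫⁻ x in Set.Ioi (0 : ℝ),
          (∫⁻ ω, ENNReal.ofReal
              (|∑ j, θ j * invProc S ω (max (t j - x) 0)| ^ α) ∂P)
            * ENNReal.ofReal ((1 - β) * x ^ (-β)) := by
  have hr : 0 < c ^ β := Real.rpow_pos_of_pos hc β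
  set T : Ω → ℝ → ℝ := fun ω u => c⁻¹ * S ω (c ^ β * u) with hTdef
  have hTsub : IsStableSubordinator β P T := isStableSubordinator_scaled hS hc hβ0
  -- integrand measurability on the state space
  have hFm : Measurable fun z : Fin k → ℝ => ENNReal.ofReal (|∑ j, θ j * z j| ^ α) := by
    have h1 : Measurable fun z : Fin k → ℝ => ∑ j, θ j * z j :=
      Finset.measurable_sum _ fun j _ => (measurable_pi_apply j).const_mul _
    have h2 : Continuous fun x : ℝ => |x| ^ α :=
      (Real.continuous_rpow_const hα0.le).comp continuous_abs
    exact ENNReal.measurable_ofReal.comp (h2.measurable.comp h1)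
  -- the inner expectation only depends on the law, which is shared by S and T
  have hinner : ∀ y : ℝ,
      ∫⁻ ω, ENNReal.ofReal (|∑ j, θ j * invProc T ω (max (t j - y) 0)| ^ α) ∂P
        = ∫⁻ ω, ENNReal.ofReal (|∑ j, θ j * invProc S ω (max (t j - y) 0)| ^ α) ∂P := by
    intro y
    have hmT : Measurable (fun ω => fun j => invProc T ω (max (t j - y) 0)) :=
      measurable_pi_lambda _ fun j => measurable_invProc hTsub _
    have hmS : Measurable (fun ω => fun j => invProc S ω (max (t j - y) 0)) :=
      measurable_pi_lambda _ fun j => measurable_invProc hS _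
    calc ∫⁻ ω, ENNReal.ofReal (|∑ j, θ j * invProc T ω (max (t j - y) 0)| ^ α) ∂P
        = ∫⁻ z, ENNReal.ofReal (|∑ j, θ j * z j| ^ α)
            ∂(P.map (fun ω => fun j => invProc T ω (max (t j - y) 0))) :=
          (lintegral_map hFm hmT).symm
      _ = ∫⁻ z, ENNReal.ofReal (|∑ j, θ j * z j| ^ α)
            ∂(P.map (fun ω => fun j => invProc S ω (max (t j - y) 0))) := by
          rw [map_invProc_eq hTsub hS (fun j => max (t j - y) 0)]
      _ = ∫⁻ ω, ENNReal.ofReal (|∑ j, θ j * invProc S ω (max (t j - y) 0)| ^ α) ∂P :=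
          lintegral_map hFm hmS
  have hα : α ≠ 0 := ne_of_gt hα0
  have hconst : ENNReal.ofReal c * (ENNReal.ofReal ((c ^ β) ^ α) * ENNReal.ofReal (c ^ (-β)))
      = ENNReal.ofReal (c ^ (α * (β + (1 - β) / α))) := by
    rw [← ENNReal.ofReal_mul (by positivity), ← ENNReal.ofReal_mul hc.le]
    congr 1
    have h1 : (c ^ β) ^ α = c ^ (β * α) := (Real.rpow_mul hc.le β α).symm
    calc c * ((c ^ β) ^ α * c ^ (-β))
        = c ^ (1 : ℝ) * (c ^ (β * α) * c ^ (-β)) := by rw [h1, Real.rpow_one]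
      _ = c ^ (1 + (β * α + -β)) := by rw [← Real.rpow_add hc, ← Real.rpow_add hc]
      _ = c ^ (α * (β + (1 - β) / α)) := by
          congr 1
          field_simp
          ring
  calc ∫⁻ x in Set.Ioi (0 : ℝ),
        (∫⁻ ω, ENNReal.ofReal
            (|∑ j, θ j * invProc S ω (max (c * t j - x) 0)| ^ α) ∂P)
          * ENNReal.ofReal ((1 - β) * x ^ (-β))
      = ENNReal.ofReal c * ∫⁻ y in Set.Ioi (0 : ℝ),
          (∫⁻ ω, ENNReal.ofReal
              (|∑ j, θ j * invProc S ω (max (c * t j - c * y) 0)| ^ α) ∂P)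
            * ENNReal.ofReal ((1 - β) * (c * y) ^ (-β)) :=
        lintegral_Ioi_scale _ hc
    _ = ENNReal.ofReal c * ∫⁻ y in Set.Ioi (0 : ℝ),
          (ENNReal.ofReal ((c ^ β) ^ α) * ENNReal.ofReal (c ^ (-β))) *
            ((∫⁻ ω, ENNReal.ofReal
                (|∑ j, θ j * invProc S ω (max (t j - y) 0)| ^ α) ∂P)
              * ENNReal.ofReal ((1 - β) * y ^ (-β))) := by
        congr 1
        refine setLIntegral_congr_fun measurableSet_Ioi (fun y hy => ?_)
        have hy0 : (0:ℝ) < y := hy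
        -- pointwise rewriting of the inner integrand
        have hin : ∀ ω, |∑ j, θ j * invProc S ω (max (c * t j - c * y) 0)| ^ α
            = (c ^ β) ^ α * |∑ j, θ j * invProc T ω (max (t j - y) 0)| ^ α := by
          intro ω
          have harg : ∀ j, max (c * t j - c * y) 0 = c * max (t j - y) 0 := by
            intro j
            rw [← mul_sub, mul_max_of_nonneg _ _ hc.le, mul_zero]
          have hTS : ∀ m : ℝ, invProc S ω (c * m) = c ^ β * invProc T ω m := by
            intro m
            rw [hTdef]
            rw [invProc_scale hc hr m]
            field_simp
          have hsum : ∑ j, θ j * invProc S ω (max (c * t j - c * y) 0)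
              = c ^ β * ∑ j, θ j * invProc T ω (max (t j - y) 0) := by
            rw [Finset.mul_sum]
            refine Finset.sum_congr rfl fun j _ => ?_
            rw [harg j, hTS (max (t j - y) 0)]
            ring
          rw [hsum, abs_mul, abs_of_pos hr, Real.mul_rpow hr.le (abs_nonneg _)]
        have hsplit : ENNReal.ofReal ((1 - β) * (c * y) ^ (-β))
            = ENNReal.ofReal (c ^ (-β)) * ENNReal.ofReal ((1 - β) * y ^ (-β)) := by
          rw [Real.mul_rpow hc.le hy0.le, ← ENNReal.ofReal_mul (by positivity)]
          congr 1
          ring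
        calc (∫⁻ ω, ENNReal.ofReal
                (|∑ j, θ j * invProc S ω (max (c * t j - c * y) 0)| ^ α) ∂P)
              * ENNReal.ofReal ((1 - β) * (c * y) ^ (-β))
            = (∫⁻ ω, ENNReal.ofReal ((c ^ β) ^ α) * ENNReal.ofReal
                (|∑ j, θ j * invProc T ω (max (t j - y) 0)| ^ α) ∂P)
              * ENNReal.ofReal ((1 - β) * (c * y) ^ (-β)) := by
              congr 1
              refine lintegral_congr fun ω => ?_
              rw [hin ω, ENNReal.ofReal_mul (by positivity)]
          _ = (ENNReal.ofReal ((c ^ β) ^ α) * ∫⁻ ω, ENNReal.ofReal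
                (|∑ j, θ j * invProc T ω (max (t j - y) 0)| ^ α) ∂P)
              * ENNReal.ofReal ((1 - β) * (c * y) ^ (-β)) := by
              rw [lintegral_const_mul' _ _ ENNReal.ofReal_ne_top]
          _ = (ENNReal.ofReal ((c ^ β) ^ α) * ∫⁻ ω, ENNReal.ofReal
                (|∑ j, θ j * invProc S ω (max (t j - y) 0)| ^ α) ∂P)
              * ENNReal.ofReal ((1 - β) * (c * y) ^ (-β)) := by
              rw [hinner y]
          _ = (ENNReal.ofReal ((c ^ β) ^ α) * ENNReal.ofReal (c ^ (-β))) *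
              ((∫⁻ ω, ENNReal.ofReal
                  (|∑ j, θ j * invProc S ω (max (t j - y) 0)| ^ α) ∂P)
                * ENNReal.ofReal ((1 - β) * y ^ (-β))) := by
              rw [hsplit]
              ring
    _ = ENNReal.ofReal c * ((ENNReal.ofReal ((c ^ β) ^ α) * ENNReal.ofReal (c ^ (-β))) *
          ∫⁻ y in Set.Ioi (0 : ℝ),
            (∫⁻ ω, ENNReal.ofReal
                (|∑ j, θ j * invProc S ω (max (t j - y) 0)| ^ α) ∂P)
              * ENNReal.ofReal ((1 - β) * y ^ (-β))) := by
        congr 1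
        exact lintegral_const_mul' _ _
          (ENNReal.mul_ne_top ENNReal.ofReal_ne_top ENNReal.ofReal_ne_top)
    _ = ENNReal.ofReal (c ^ (α * (β + (1 - β) / α))) *
          ∫⁻ x in Set.Ioi (0 : ℝ),
            (∫⁻ ω, ENNReal.ofReal
                (|∑ j, θ j * invProc S ω (max (t j - x) 0)| ^ α) ∂P)
              * ENNReal.ofReal ((1 - β) * x ^ (-β)) := by
        rw [← mul_assoc, hconst]
end

section
/- Let 0<β<1 and let M_β be the Mittag-Leffler process (the inverse of a β-stable subordinator). For B>0 define the random variable K = sup_{0≤s<t<s+1/2≤B} |M_β(t) − M_β(s)| / ( (t−s)^β |log(t−s)|^{1−β} ). Then K is almost surely finite and has finite moments of all orders, i.e. E[K^p] < ∞ for every p>0. -/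
open MeasureTheory ProbabilityTheory Filter
open scoped ENNReal Topology
set_option maxHeartbeats 1000000

/-- The (random) Hölder constant of the Mittag-Leffler process over `[0, B]`:
`K = sup_{0 ≤ s < t < s + 1/2 ≤ B} |M_β(t) - M_β(s)| / ((t-s)^β |log (t-s)|^{1-β})`,
computed in `ℝ≥0∞`. -/
noncomputable def holderSup {Ω : Type*} (S : Ω → ℝ → ℝ) (β B : ℝ) (ω : Ω) : ℝ≥0∞ :=
  ⨆ (s : ℝ) (t : ℝ) (_ : 0 ≤ s ∧ s < t ∧ t < s + 1 / 2 ∧ s + 1 / 2 ≤ B),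
    ENNReal.ofReal
      (|invProc S ω t - invProc S ω s| /
        ((t - s) ^ β * |Real.log (t - s)| ^ (1 - β)))


namespace MLaux

/-- Chernoff-type bound for the lower tail of an increment of the subordinator. -/
lemma chernoff {Ω : Type*} [MeasurableSpace Ω] {P : Measure Ω} [IsProbabilityMeasure P]
    {β : ℝ} {S : Ω → ℝ → ℝ} (hS : IsStableSubordinator β P S)
    {θ v u : ℝ} (ε : ℝ) (hθ : 0 ≤ θ) (hv : 0 ≤ v) (hvu : v ≤ u) :
    P {ω | S ω u - S ω v ≤ ε} ≤ ENNReal.ofReal (Real.exp (θ * ε - (u - v) * θ ^ β)) := by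
  set X : Ω → ℝ := fun ω => S ω u - S ω v with hX
  have hmeas : Measurable X := (hS.meas u).sub (hS.meas v)
  have hXnonneg : ∀ ω, 0 ≤ X ω := fun ω => sub_nonneg.2 (hS.mono ω hvu)
  have hbdd : ∀ ω, ‖Real.exp (-θ * X ω)‖ ≤ 1 := by
    intro ω
    rw [Real.norm_eq_abs, abs_of_pos (Real.exp_pos _)]
    exact Real.exp_le_one_iff.2 (by nlinarith [hXnonneg ω])
  have hint : Integrable (fun ω => Real.exp (-θ * X ω)) P :=
    (integrable_const (1 : ℝ)).mono'
      ((hmeas.const_mul (-θ)).exp.aestronglyMeasurable) (Filter.Eventually.of_forall hbdd)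
  have hmgf : mgf X P (-θ) = Real.exp (-(u - v) * θ ^ β) := by
    rw [mgf]
    simpa using hS.laplace θ hθ v u hv hvu
  have h := measure_le_le_exp_mul_mgf (X := X) (μ := P) ε (neg_nonpos.2 hθ) hint
  rw [hmgf, neg_neg, ← Real.exp_add] at h
  have hEq : θ * ε + -(u - v) * θ ^ β = θ * ε - (u - v) * θ ^ β := by ring
  rw [hEq] at h
  calc P {ω | X ω ≤ ε} = ENNReal.ofReal ((P {ω | X ω ≤ ε}).toReal) := by
        rw [ENNReal.ofReal_toReal (measure_ne_top _ _)]
    _ ≤ _ := ENNReal.ofReal_le_ofReal h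

/-- the constant `(1/2)^(β/(1-β))`. -/
noncomputable def cb (β : ℝ) : ℝ := (1 / 2 : ℝ) ^ (β / (1 - β))

noncomputable def Ak (β : ℝ) (k : ℕ) : ℝ := ((k : ℝ) + 2) / cb β

noncomputable def xnk (β : ℝ) (k n : ℕ) : ℝ :=
  (Ak β k * ((n : ℝ) + 1)) ^ (1 - β) * (((1 / 2 : ℝ) ^ (n + 1)) ^ β)

def Rk (B : ℝ) (k : ℕ) : ℝ := B + (k : ℝ) + 2

variable {β : ℝ}

lemma cb_pos : 0 < cb β := Real.rpow_pos_of_pos (by norm_num) _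

lemma cb_le_one (hβ0 : 0 < β) (hβ1 : β < 1) : cb β ≤ 1 :=
  Real.rpow_le_one (by norm_num) (by norm_num)
    (div_nonneg hβ0.le (by linarith))

lemma Ak_ge (hβ0 : 0 < β) (hβ1 : β < 1) (k : ℕ) : (k : ℝ) + 2 ≤ Ak β k := by
  rw [Ak, le_div_iff₀ (cb_pos (β := β))]
  nlinarith [cb_le_one hβ0 hβ1, cb_pos (β := β), Nat.cast_nonneg (α := ℝ) k]

lemma Ak_pos (hβ0 : 0 < β) (hβ1 : β < 1) (k : ℕ) : 0 < Ak β k := by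
  have := Ak_ge hβ0 hβ1 k; nlinarith [Nat.cast_nonneg (α := ℝ) k]

lemma one_le_An (hβ0 : 0 < β) (hβ1 : β < 1) (k n : ℕ) : 1 ≤ Ak β k * ((n : ℝ) + 1) := by
  have h1 := Ak_ge hβ0 hβ1 k
  nlinarith [Nat.cast_nonneg (α := ℝ) k, Nat.cast_nonneg (α := ℝ) n]

lemma xnk_pos (hβ0 : 0 < β) (hβ1 : β < 1) (k n : ℕ) : 0 < xnk β k n := by
  apply mul_pos
  · exact Real.rpow_pos_of_pos (by nlinarith [one_le_An hβ0 hβ1 k n]) _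
  · exact Real.rpow_pos_of_pos (by positivity) _

lemma half_pow_le_xnk (hβ0 : 0 < β) (hβ1 : β < 1) (k n : ℕ) :
    (1 / 2 : ℝ) ^ (n + 1) ≤ xnk β k n := by
  have h1 : 1 ≤ (Ak β k * ((n : ℝ) + 1)) ^ (1 - β) :=
    Real.one_le_rpow (one_le_An hβ0 hβ1 k n) (by linarith)
  have h2 : ((1 / 2 : ℝ) ^ (n + 1) : ℝ) ^ (1 : ℝ) ≤ (((1 / 2 : ℝ) ^ (n + 1)) ^ β) := by
    apply Real.rpow_le_rpow_of_exponent_ge (by positivity)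
    · exact pow_le_one₀ (by norm_num) (by norm_num)
    · linarith
  rw [Real.rpow_one] at h2
  calc (1 / 2 : ℝ) ^ (n + 1) ≤ ((1 / 2 : ℝ) ^ (n + 1)) ^ β := h2
    _ ≤ xnk β k n := by
        rw [xnk]
        nlinarith [Real.rpow_pos_of_pos (show (0:ℝ) < (1/2:ℝ)^(n+1) by positivity) β]

lemma theta_calc (hβ0 : 0 < β) (hβ1 : β < 1) (k n : ℕ) :
    ∃ θ : ℝ, 0 ≤ θ ∧
      θ * ((1 / 2 : ℝ) ^ n) - (2 * xnk β k n) * θ ^ β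
        = -(((k : ℝ) + 2) * ((n : ℝ) + 1)) := by
  have hb : (0 : ℝ) < 1 - β := by linarith
  have ha : (0 : ℝ) < Ak β k * ((n : ℝ) + 1) := lt_of_lt_of_le one_pos (one_le_An hβ0 hβ1 k n)
  set a : ℝ := Ak β k * ((n : ℝ) + 1) with hadef
  set x := xnk β k n with hxdef
  have hx : 0 < x := xnk_pos hβ0 hβ1 k n
  set h' : ℝ := (1 / 2 : ℝ) ^ n with hh'def
  have hh' : 0 < h' := by positivity
  set q : ℝ := x / h' with hqdef
  have hq : 0 < q := div_pos hx hh'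
  refine ⟨q ^ (1 / (1 - β)), Real.rpow_nonneg hq.le _, ?_⟩
  have hθβ : (q ^ (1 / (1 - β))) ^ β = q ^ (β / (1 - β)) := by
    rw [← Real.rpow_mul hq.le]
    congr 1
    field_simp
  have key1 : q ^ (1 / (1 - β)) = q * q ^ (β / (1 - β)) := by
    have h1 : 1 / (1 - β) = 1 + β / (1 - β) := by field_simp; ring
    rw [h1, Real.rpow_add hq, Real.rpow_one]
  have hqh : q * h' = x := div_mul_cancel₀ x hh'.ne'
  have e1 : q ^ (1 / (1 - β)) * h' - 2 * x * (q ^ (1 / (1 - β))) ^ β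
      = -(q ^ (1 / (1 - β)) * h') := by
    rw [hθβ, key1]
    linear_combination (2 * q ^ (β / (1 - β))) * hqh
  have hhalf : (0 : ℝ) < 1 / 2 := by norm_num
  have hxr : x = a ^ (1 - β) * (1 / 2 : ℝ) ^ (((n : ℝ) + 1) * β) := by
    rw [hxdef, xnk, ← hadef]
    congr 1
    rw [← Real.rpow_natCast (1 / 2 : ℝ) (n + 1), ← Real.rpow_mul hhalf.le]
    push_cast
    ring_nf
  have hh'r : h' = (1 / 2 : ℝ) ^ (n : ℝ) := by
    rw [hh'def, ← Real.rpow_natCast (1 / 2 : ℝ) n]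
  have hqr : q = a ^ (1 - β) * (1 / 2 : ℝ) ^ (((n : ℝ) + 1) * β - (n : ℝ)) := by
    rw [hqdef, hxr, hh'r, Real.rpow_sub hhalf, mul_div_assoc]
  have key2 : q ^ (1 / (1 - β)) * h' = a * cb β := by
    rw [hqr, Real.mul_rpow (Real.rpow_nonneg ha.le _) (Real.rpow_nonneg hhalf.le _),
      ← Real.rpow_mul ha.le, ← Real.rpow_mul hhalf.le, hh'r,
      mul_assoc, ← Real.rpow_add hhalf]
    have ea : (1 - β) * (1 / (1 - β)) = 1 := by field_simp
    have eb : (((n : ℝ) + 1) * β - (n : ℝ)) * (1 / (1 - β)) + (n : ℝ) = β / (1 - β) := by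
      field_simp
      ring
    rw [ea, eb, Real.rpow_one, cb]
  have key3 : Ak β k * cb β = (k : ℝ) + 2 := div_mul_cancel₀ _ (cb_pos (β := β)).ne'
  rw [e1, key2, hadef]
  rw [← key3]
  ring

end MLaux

namespace MLaux

variable {β : ℝ}

variable {Ω : Type*} {S : Ω → ℝ → ℝ} {ω : Ω}

lemma inv_mem_bdd (t : ℝ) : BddBelow {u : ℝ | 0 ≤ u ∧ t ≤ S ω u} :=
  ⟨0, fun u hu => hu.1⟩

lemma inv_nonneg {t W : ℝ} (hW : 0 ≤ W) (hSW : t ≤ S ω W) : 0 ≤ invProc S ω t :=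
  le_csInf ⟨W, hW, hSW⟩ fun u hu => hu.1

lemma inv_le {t W : ℝ} (hW : 0 ≤ W) (hSW : t ≤ S ω W) : invProc S ω t ≤ W :=
  csInf_le (inv_mem_bdd t) ⟨hW, hSW⟩

lemma inv_mono (hmono : Monotone (S ω)) {s t W : ℝ} (hst : s ≤ t) (hW : 0 ≤ W)
    (hSW : t ≤ S ω W) : invProc S ω s ≤ invProc S ω t := by
  exact csInf_le_csInf (inv_mem_bdd s) ⟨W, ⟨hW, hSW⟩⟩ fun u hu => ⟨hu.1, le_trans hst hu.2⟩

lemma le_S_inv (hmono : Monotone (S ω))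
    (hrc : ∀ u : ℝ, ContinuousWithinAt (S ω) (Set.Ici u) u)
    {t W : ℝ} (hW : 0 ≤ W) (hSW : t ≤ S ω W) : t ≤ S ω (invProc S ω t) := by
  have hne : {u : ℝ | 0 ≤ u ∧ t ≤ S ω u}.Nonempty := ⟨W, hW, hSW⟩
  have key : ∀ v, invProc S ω t < v → t ≤ S ω v := by
    intro v hv
    obtain ⟨u, huI, huv⟩ := exists_lt_of_csInf_lt hne hv
    exact huI.2.trans (hmono huv.le)
  have htend : Tendsto (S ω) (𝓝[>] (invProc S ω t)) (𝓝 (S ω (invProc S ω t))) :=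
    (hrc _).mono_left (nhdsWithin_mono _ Set.Ioi_subset_Ici_self)
  exact ge_of_tendsto htend (eventually_nhdsWithin_of_forall fun v hv => key v hv)

lemma S_lt_of_lt_inv {t v : ℝ} (hv : 0 ≤ v) (hlt : v < invProc S ω t) : S ω v < t := by
  by_contra hc
  push_neg at hc
  exact absurd (csInf_le (inv_mem_bdd t) ⟨hv, hc⟩) (not_le.2 hlt)

lemma exists_dyadic {h : ℝ} (h0 : 0 < h) (hh : h < 1 / 2) :
    ∃ n : ℕ, 1 ≤ n ∧ (1 / 2 : ℝ) ^ (n + 1) ≤ h ∧ h < (1 / 2 : ℝ) ^ n := by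
  have hex : ∃ m : ℕ, (1 / 2 : ℝ) ^ m ≤ h := by
    obtain ⟨m, hm⟩ := exists_pow_lt_of_lt_one h0 (by norm_num : (1 / 2 : ℝ) < 1)
    exact ⟨m, hm.le⟩
  classical
  have hQ0 : ¬ ((1 / 2 : ℝ) ^ (0 : ℕ) ≤ h) := by rw [pow_zero]; push_neg; linarith
  have hQ1 : ¬ ((1 / 2 : ℝ) ^ (1 : ℕ) ≤ h) := by rw [pow_one]; push_neg; exact hh
  have hm2 : 2 ≤ Nat.find hex := by
    by_contra hc
    push_neg at hc
    have h0' := Nat.find_spec hex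
    have : Nat.find hex = 0 ∨ Nat.find hex = 1 := by omega
    rcases this with h' | h' <;> rw [h'] at h0'
    · exact hQ0 h0'
    · exact hQ1 h0'
  refine ⟨Nat.find hex - 1, by omega, ?_, ?_⟩
  · rw [show Nat.find hex - 1 + 1 = Nat.find hex by omega]
    exact Nat.find_spec hex
  · have := Nat.find_min hex (show Nat.find hex - 1 < Nat.find hex by omega)
    linarith [not_le.1 this]

/-- The good event. -/
def Eset {Ω : Type*} (S : Ω → ℝ → ℝ) (β B : ℝ) (k : ℕ) : Set Ω :=
  {ω | B ≤ S ω (Rk B k - 1)} ∩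
    ⋂ (n : ℕ) (_ : 1 ≤ n) (j : ℕ) (_ : (j : ℝ) * xnk β k n ≤ 2 * Rk B k),
      {ω | (1 / 2 : ℝ) ^ n
        ≤ S ω ((j : ℝ) * xnk β k n + 2 * xnk β k n) - S ω ((j : ℝ) * xnk β k n)}

lemma Eset_measurable {Ω : Type*} [MeasurableSpace Ω] {P : Measure Ω} {S : Ω → ℝ → ℝ}
    (hS : IsStableSubordinator β P S) (B : ℝ) (k : ℕ) :
    MeasurableSet (Eset S β B k) := by
  apply MeasurableSet.inter
  · exact measurableSet_le measurable_const (hS.meas _)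
  · refine MeasurableSet.iInter fun n => MeasurableSet.iInter fun _ =>
      MeasurableSet.iInter fun j => MeasurableSet.iInter fun _ => ?_
    exact measurableSet_le measurable_const ((hS.meas _).sub (hS.meas _))

lemma Eset_compl_le {Ω : Type*} [MeasurableSpace Ω] {P : Measure Ω} [IsProbabilityMeasure P]
    {S : Ω → ℝ → ℝ} (hβ0 : 0 < β) (hβ1 : β < 1) (hS : IsStableSubordinator β P S)
    {B : ℝ} (hB : 0 < B) (k : ℕ) :
    P (Eset S β B k)ᶜ
      ≤ ENNReal.ofReal (Real.exp (-(k : ℝ)) * (40 * (B + (k : ℝ) + 3))) := by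
  set R := Rk B k with hRdef
  have hR : R = B + (k : ℝ) + 2 := rfl
  -- the first event
  have h1 : P {ω | B ≤ S ω (R - 1)}ᶜ ≤ ENNReal.ofReal (Real.exp (-((k : ℝ) + 1))) := by
    have hsub : {ω | B ≤ S ω (R - 1)}ᶜ ⊆ {ω | S ω (R - 1) - S ω 0 ≤ B} := by
      intro ω hω
      simp only [Set.mem_compl_iff, Set.mem_setOf_eq, not_le] at hω ⊢
      rw [hS.zero ω]
      linarith
    refine (measure_mono hsub).trans ?_
    have := chernoff (θ := 1) (v := 0) (u := R - 1) hS B (by norm_num) le_rfl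
      (by rw [hR]; nlinarith [Nat.cast_nonneg (α := ℝ) k])
    rw [Real.one_rpow] at this
    refine this.trans (ENNReal.ofReal_le_ofReal (Real.exp_le_exp.2 ?_))
    rw [hR]; ring_nf; norm_num
  -- per-increment bound
  have h2 : ∀ n j : ℕ,
      P {ω | (1 / 2 : ℝ) ^ n
          ≤ S ω ((j : ℝ) * xnk β k n + 2 * xnk β k n) - S ω ((j : ℝ) * xnk β k n)}ᶜ
        ≤ ENNReal.ofReal (Real.exp (-(((k : ℝ) + 2) * ((n : ℝ) + 1)))) := by
    intro n j
    obtain ⟨θ, hθ0, hθeq⟩ := theta_calc hβ0 hβ1 k n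
    have hx := xnk_pos hβ0 hβ1 k n
    have hjx : (0 : ℝ) ≤ (j : ℝ) * xnk β k n := by positivity
    have hsub : {ω | (1 / 2 : ℝ) ^ n
          ≤ S ω ((j : ℝ) * xnk β k n + 2 * xnk β k n) - S ω ((j : ℝ) * xnk β k n)}ᶜ
        ⊆ {ω | S ω ((j : ℝ) * xnk β k n + 2 * xnk β k n) - S ω ((j : ℝ) * xnk β k n)
            ≤ (1 / 2 : ℝ) ^ n} := by
      intro ω hω
      simp only [Set.mem_compl_iff, Set.mem_setOf_eq, not_le] at hω ⊢
      linarith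
    refine (measure_mono hsub).trans ?_
    have := chernoff (θ := θ) (v := (j : ℝ) * xnk β k n)
      (u := (j : ℝ) * xnk β k n + 2 * xnk β k n) hS ((1 / 2 : ℝ) ^ n) hθ0 hjx (by linarith)
    refine this.trans (le_of_eq ?_)
    congr 1
    rw [show (j : ℝ) * xnk β k n + 2 * xnk β k n - (j : ℝ) * xnk β k n = 2 * xnk β k n by ring]
    rw [← hθeq]
  -- split into the two parts
  set G : ℕ → ℕ → Set Ω := fun n j =>
    {ω | (1 / 2 : ℝ) ^ n
      ≤ S ω ((j : ℝ) * xnk β k n + 2 * xnk β k n) - S ω ((j : ℝ) * xnk β k n)} with hGdef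
  have hsplit : P (Eset S β B k)ᶜ
      ≤ P {ω | B ≤ S ω (R - 1)}ᶜ
        + P (⋂ (n : ℕ) (_ : 1 ≤ n) (j : ℕ) (_ : (j : ℝ) * xnk β k n ≤ 2 * R), G n j)ᶜ := by
    rw [Eset, Set.compl_inter]
    exact measure_union_le _ _
  set r : ℝ := 2 * Real.exp (-((k : ℝ) + 2)) with hrdef
  have hrpos : 0 < r := by positivity
  have hexp2 : (4 : ℝ) < Real.exp 2 := by
    have h := Real.exp_one_gt_d9
    have : Real.exp 2 = Real.exp 1 * Real.exp 1 := by
      rw [← Real.exp_add]; norm_num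
    nlinarith
  have hrhalf : r < 1 / 2 := by
    have h1 : Real.exp (-((k : ℝ) + 2)) ≤ Real.exp (-2) := by
      apply Real.exp_le_exp.2
      nlinarith [Nat.cast_nonneg (α := ℝ) k]
    have h2 : Real.exp (-2 : ℝ) = (Real.exp 2)⁻¹ := Real.exp_neg 2
    have h3 : Real.exp (-2 : ℝ) < 1 / 4 := by
      rw [h2]
      rw [inv_lt_comm₀ (by positivity) (by norm_num)]
      rw [one_div, inv_inv]
      exact hexp2
    nlinarith
  have hrlt1 : r < 1 := by linarith
  have hRpos : (0 : ℝ) < R := by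
    rw [hR]; nlinarith [Nat.cast_nonneg (α := ℝ) k]
  -- per-scale bound
  have h3 : ∀ n : ℕ,
      P (⋃ (_ : 1 ≤ n) (j : ℕ) (_ : (j : ℝ) * xnk β k n ≤ 2 * R), (G n j)ᶜ)
        ≤ ENNReal.ofReal ((2 * R + 1) * r ^ (n + 1)) := by
    intro n
    set Nn := ⌊2 * R / xnk β k n⌋₊ with hNndef
    have hx := xnk_pos hβ0 hβ1 k n
    have hincl : (⋃ (_ : 1 ≤ n) (j : ℕ) (_ : (j : ℝ) * xnk β k n ≤ 2 * R), (G n j)ᶜ)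
        ⊆ ⋃ j ∈ Finset.range (Nn + 1), (G n j)ᶜ := by
      intro ω hω
      simp only [Set.mem_iUnion] at hω
      obtain ⟨-, j, hj, hmem⟩ := hω
      have hjN : j ≤ Nn := by
        apply Nat.le_floor
        rw [le_div_iff₀ hx]
        exact hj
      exact Set.mem_iUnion₂.2 ⟨j, Finset.mem_range.2 (Nat.lt_succ_of_le hjN), hmem⟩
    refine (measure_mono hincl).trans ?_
    refine (measure_biUnion_finset_le _ _).trans ?_
    have hsum : ∑ j ∈ Finset.range (Nn + 1), P (G n j)ᶜ
        ≤ (Nn + 1) • ENNReal.ofReal (Real.exp (-(((k : ℝ) + 2) * ((n : ℝ) + 1)))) := by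
      have := Finset.sum_le_card_nsmul (Finset.range (Nn + 1)) (fun j => P (G n j)ᶜ)
        (ENNReal.ofReal (Real.exp (-(((k : ℝ) + 2) * ((n : ℝ) + 1)))))
        (fun j _ => h2 n j)
      simpa using this
    refine hsum.trans ?_
    rw [nsmul_eq_mul, ← ENNReal.ofReal_natCast, ← ENNReal.ofReal_mul (by positivity)]
    apply ENNReal.ofReal_le_ofReal
    have hNle : (Nn : ℝ) ≤ 2 * R / xnk β k n := Nat.floor_le (by positivity)
    have hxl := half_pow_le_xnk hβ0 hβ1 k n
    have hpow : (2 : ℝ) ^ (n + 1) * (1 / 2 : ℝ) ^ (n + 1) = 1 := by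
      rw [← mul_pow]; norm_num
    have hdiv : 2 * R / xnk β k n ≤ 2 * R * 2 ^ (n + 1) := by
      rw [div_le_iff₀ hx]
      have h5 : (2 : ℝ) * R * 1 ≤ 2 * R * ((2 : ℝ) ^ (n + 1) * xnk β k n) := by
        apply mul_le_mul_of_nonneg_left _ (by positivity)
        calc (1 : ℝ) = 2 ^ (n + 1) * (1 / 2) ^ (n + 1) := hpow.symm
          _ ≤ 2 ^ (n + 1) * xnk β k n := by
              apply mul_le_mul_of_nonneg_left hxl (by positivity)
      nlinarith [h5]
    have hone : (1 : ℝ) ≤ 2 ^ (n + 1) := one_le_pow₀ (by norm_num)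
    have hcount : ((Nn + 1 : ℕ) : ℝ) ≤ (2 * R + 1) * 2 ^ (n + 1) := by
      push_cast
      nlinarith
    have hexp_eq : Real.exp (-(((k : ℝ) + 2) * ((n : ℝ) + 1)))
        = Real.exp (-((k : ℝ) + 2)) ^ (n + 1) := by
      rw [← Real.exp_nat_mul]
      congr 1
      push_cast
      ring
    rw [hexp_eq, hrdef]
    calc ((Nn + 1 : ℕ) : ℝ) * Real.exp (-((k : ℝ) + 2)) ^ (n + 1)
        ≤ (2 * R + 1) * 2 ^ (n + 1) * Real.exp (-((k : ℝ) + 2)) ^ (n + 1) := by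
          apply mul_le_mul_of_nonneg_right hcount (by positivity)
      _ = (2 * R + 1) * (2 * Real.exp (-((k : ℝ) + 2))) ^ (n + 1) := by
          rw [mul_pow]; ring
  -- sum over scales
  have h4 : P (⋂ (n : ℕ) (_ : 1 ≤ n) (j : ℕ) (_ : (j : ℝ) * xnk β k n ≤ 2 * R), G n j)ᶜ
      ≤ ENNReal.ofReal (4 * (2 * R + 1) * Real.exp (-((k : ℝ) + 2))) := by
    rw [Set.compl_iInter]
    simp only [Set.compl_iInter]
    refine (measure_iUnion_le _).trans ?_
    refine (ENNReal.tsum_le_tsum (fun n => h3 n)).trans ?_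
    have hnn : ∀ n : ℕ, 0 ≤ (2 * R + 1) * r ^ (n + 1) := fun n => by positivity
    have hsummable : Summable (fun n : ℕ => (2 * R + 1) * r ^ (n + 1)) := by
      have : (fun n : ℕ => (2 * R + 1) * r ^ (n + 1))
          = fun n : ℕ => ((2 * R + 1) * r) * r ^ n := by
        funext n
        rw [pow_succ]
        ring
      rw [this]
      exact (summable_geometric_of_lt_one hrpos.le hrlt1).mul_left _
    rw [← ENNReal.ofReal_tsum_of_nonneg hnn hsummable]
    apply ENNReal.ofReal_le_ofReal
    have htsum : ∑' n : ℕ, (2 * R + 1) * r ^ (n + 1) = ((2 * R + 1) * r) * (1 - r)⁻¹ := by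
      calc ∑' n : ℕ, (2 * R + 1) * r ^ (n + 1)
          = ∑' n : ℕ, ((2 * R + 1) * r) * r ^ n := by
            congr 1
            funext n
            rw [pow_succ]
            ring
        _ = ((2 * R + 1) * r) * ∑' n : ℕ, r ^ n := tsum_mul_left
        _ = ((2 * R + 1) * r) * (1 - r)⁻¹ := by
            rw [tsum_geometric_of_lt_one hrpos.le hrlt1]
    rw [htsum]
    have hinv : (1 - r)⁻¹ ≤ 2 := by
      rw [inv_le_comm₀ (by linarith) (by norm_num)]
      linarith
    have : (0 : ℝ) ≤ (2 * R + 1) * r := by positivity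
    nlinarith [Real.exp_pos (-((k : ℝ) + 2))]
  refine hsplit.trans ((add_le_add h1 h4).trans ?_)
  rw [← ENNReal.ofReal_add (by positivity) (by positivity)]
  apply ENNReal.ofReal_le_ofReal
  have e0 := Real.exp_pos (-(k : ℝ))
  have e1 : Real.exp (-((k : ℝ) + 1)) ≤ Real.exp (-(k : ℝ)) :=
    Real.exp_le_exp.2 (by linarith)
  have e2 : Real.exp (-((k : ℝ) + 2)) ≤ Real.exp (-(k : ℝ)) :=
    Real.exp_le_exp.2 (by linarith)
  have hk0 : (0 : ℝ) ≤ (k : ℝ) := Nat.cast_nonneg k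
  rw [hR]
  nlinarith [Real.exp_pos (-((k : ℝ) + 2)), Real.exp_pos (-((k : ℝ) + 1))]

/-- The deterministic chaining bound on the good event. -/
lemma holder_bound (hβ0 : 0 < β) (hβ1 : β < 1)
    (hmono : Monotone (S ω)) (hrc : ∀ u : ℝ, ContinuousWithinAt (S ω) (Set.Ici u) u)
    {B : ℝ} (hB : 0 < B) (k : ℕ) (hω : ω ∈ Eset S β B k) :
    holderSup S β B ω ≤ ENNReal.ofReal (9 * Ak β k) := by
  refine iSup_le fun s => iSup_le fun t => iSup_le fun hc => ?_
  obtain ⟨hs0, hst, hts, hsB⟩ := hc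
  apply ENNReal.ofReal_le_ofReal
  -- setup
  have h0 : 0 < t - s := by linarith
  have hh : t - s < 1 / 2 := by linarith
  have htB : t ≤ B := by linarith
  have hsB' : s ≤ B := by linarith
  obtain ⟨n, hn1, hdy1, hdy2⟩ := exists_dyadic h0 hh
  set x := xnk β k n with hxdef
  have hx : 0 < x := xnk_pos hβ0 hβ1 k n
  set R := Rk B k with hRdef
  have hR : R = B + (k : ℝ) + 2 := rfl
  have hk0 : (0 : ℝ) ≤ (k : ℝ) := Nat.cast_nonneg k
  have hW : (0 : ℝ) ≤ R - 1 := by rw [hR]; linarith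
  have hSW : B ≤ S ω (R - 1) := hω.1
  have hSWt : t ≤ S ω (R - 1) := le_trans htB hSW
  have hSWs : s ≤ S ω (R - 1) := le_trans hsB' hSW
  set M := invProc S ω with hMdef
  have hMnn : 0 ≤ M s := inv_nonneg hW hSWs
  have hMts : M s ≤ M t := inv_mono hmono (le_of_lt hst) hW hSWt
  have hMtle : M t ≤ R - 1 := inv_le hW hSWt
  have hAk := Ak_pos hβ0 hβ1 k
  have hAk2 : (2 : ℝ) ≤ Ak β k := by
    have := Ak_ge hβ0 hβ1 k; linarith
  -- Step 1 : M t - M s ≤ 3 * x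
  have step1 : M t - M s ≤ 3 * x := by
    rcases le_or_gt (R - 1) (3 * x) with hcase | hcase
    · linarith
    by_contra hMd
    push_neg at hMd
    set j := ⌈M s / x⌉₊ with hjdef
    set u := (j : ℝ) * x with hudef
    have hu1 : M s ≤ u := by
      rw [hudef]
      rw [← div_le_iff₀ hx]
      exact Nat.le_ceil _
    have hu2 : u < M s + x := by
      have hceil : (j : ℝ) < M s / x + 1 := Nat.ceil_lt_add_one (by positivity)
      have := mul_lt_mul_of_pos_right hceil hx
      rw [add_mul, div_mul_cancel₀ _ hx.ne', one_mul] at this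
      exact this
    have hu0 : (0 : ℝ) ≤ u := by positivity
    have hcond : u ≤ 2 * R := by
      have : u < R - 1 + x := by linarith
      nlinarith
    -- use the event
    have hev : (1 / 2 : ℝ) ^ n ≤ S ω (u + 2 * x) - S ω u := by
      have h2 := hω.2
      simp only [Set.mem_iInter] at h2
      exact h2 n hn1 j hcond
    -- contradiction
    have hSu : s ≤ S ω u := le_trans (le_S_inv hmono hrc hW hSWs) (hmono hu1)
    have hSu2 : S ω (u + 2 * x) < t := by
      apply S_lt_of_lt_inv (by positivity)
      calc u + 2 * x < M s + 3 * x := by linarith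
        _ < M t := by linarith
    have : S ω (u + 2 * x) - S ω u < t - s := by linarith
    have hts2 : t - s < (1 / 2 : ℝ) ^ n := hdy2
    linarith
  -- Step 2 : 3 * x ≤ 9 * Ak β k * den
  set den := (t - s) ^ β * |Real.log (t - s)| ^ (1 - β) with hdendef
  have hlog2pos : (0 : ℝ) < Real.log 2 := Real.log_pos (by norm_num)
  have hlogneg : Real.log (t - s) < 0 := Real.log_neg h0 (by linarith)
  have habs : |Real.log (t - s)| = -Real.log (t - s) := abs_of_neg hlogneg
  have hn1R : (1 : ℝ) ≤ (n : ℝ) := by exact_mod_cast hn1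
  set L := (n : ℝ) * Real.log 2 with hLdef
  have hL : 0 < L := by positivity
  have hloglb : L ≤ -Real.log (t - s) := by
    have h1 : Real.log (t - s) < Real.log ((1 / 2 : ℝ) ^ n) := Real.log_lt_log h0 hdy2
    have h2 : Real.log ((1 / 2 : ℝ) ^ n) = -((n : ℝ) * Real.log 2) := by
      rw [Real.log_pow]
      rw [show (1 / 2 : ℝ) = 2⁻¹ by norm_num, Real.log_inv]
      push_cast
      ring
    rw [h2] at h1
    linarith
  have hden_lb : ((1 / 2 : ℝ) ^ (n + 1)) ^ β * L ^ (1 - β) ≤ den := by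
    rw [hdendef, habs]
    apply mul_le_mul
    · exact Real.rpow_le_rpow (by positivity) hdy1 hβ0.le
    · exact Real.rpow_le_rpow hL.le hloglb (by linarith)
    · exact Real.rpow_nonneg hL.le _
    · exact Real.rpow_nonneg h0.le _
  have hden_pos : 0 < den := by
    rw [hdendef, habs]
    apply mul_pos (Real.rpow_pos_of_pos h0 _) (Real.rpow_pos_of_pos (by linarith) _)
  -- key : (Ak (n+1))^(1-β) ≤ 3 Ak L^(1-β)
  have hlog2lt : Real.log 2 < 0.6931471808 := Real.log_two_lt_d9
  have hlog2gt : (0.6931471803 : ℝ) < Real.log 2 := Real.log_two_gt_d9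
  set r := Ak β k * ((n : ℝ) + 1) / L with hrdef2
  have hlog2le1 : Real.log 2 ≤ 1 := by linarith
  have hLn : L ≤ (n : ℝ) := by
    rw [hLdef]
    exact mul_le_of_le_one_right (by positivity) hlog2le1
  have hr1 : 1 ≤ r := by
    rw [hrdef2, le_div_iff₀ hL, one_mul]
    have h2n : 2 * ((n : ℝ) + 1) ≤ Ak β k * ((n : ℝ) + 1) :=
      mul_le_mul_of_nonneg_right hAk2 (by positivity)
    linarith
  have hrL : r * L = Ak β k * ((n : ℝ) + 1) := div_mul_cancel₀ _ hL.ne'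
  have hr3 : r ≤ 3 * Ak β k := by
    rw [hrdef2, div_le_iff₀ hL, hLdef]
    have hinner : (n : ℝ) + 1 ≤ 3 * (n : ℝ) * Real.log 2 := by
      nlinarith [mul_le_mul_of_nonneg_left hlog2gt.le (by positivity : (0:ℝ) ≤ 3 * (n : ℝ))]
    calc Ak β k * ((n : ℝ) + 1) ≤ Ak β k * (3 * (n : ℝ) * Real.log 2) :=
          mul_le_mul_of_nonneg_left hinner hAk.le
      _ = 3 * Ak β k * ((n : ℝ) * Real.log 2) := by ring
  have key : (Ak β k * ((n : ℝ) + 1)) ^ (1 - β) ≤ 3 * Ak β k * L ^ (1 - β) := by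
    rw [← hrL, Real.mul_rpow (by linarith) hL.le]
    have h1 : r ^ (1 - β) ≤ r := by
      have := Real.rpow_le_rpow_of_exponent_le hr1 (show 1 - β ≤ 1 by linarith)
      rwa [Real.rpow_one] at this
    have h2 : (0 : ℝ) ≤ L ^ (1 - β) := Real.rpow_nonneg hL.le _
    exact mul_le_mul_of_nonneg_right (h1.trans hr3) h2
  have step2 : 3 * x ≤ 9 * Ak β k * den := by
    have hpb : (0 : ℝ) ≤ ((1 / 2 : ℝ) ^ (n + 1)) ^ β := Real.rpow_nonneg (by positivity) _
    calc 3 * x = 3 * ((Ak β k * ((n : ℝ) + 1)) ^ (1 - β) * ((1 / 2 : ℝ) ^ (n + 1)) ^ β) := by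
          rw [hxdef, xnk]
      _ ≤ 3 * ((3 * Ak β k * L ^ (1 - β)) * ((1 / 2 : ℝ) ^ (n + 1)) ^ β) := by
          apply mul_le_mul_of_nonneg_left _ (by norm_num)
          exact mul_le_mul_of_nonneg_right key hpb
      _ = 9 * Ak β k * (((1 / 2 : ℝ) ^ (n + 1)) ^ β * L ^ (1 - β)) := by ring
      _ ≤ 9 * Ak β k * den := by
          apply mul_le_mul_of_nonneg_left hden_lb (by positivity)
  -- finish
  have habs2 : |M t - M s| = M t - M s := abs_of_nonneg (by linarith)
  rw [habs2, div_le_iff₀ hden_pos]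
  calc M t - M s ≤ 3 * x := step1
    _ ≤ 9 * Ak β k * den := step2

lemma exp_neg_nat (k : ℕ) : Real.exp (-(k : ℝ)) = Real.exp (-1 : ℝ) ^ k := by
  rw [← Real.exp_nat_mul]
  congr 1
  push_cast
  ring

lemma summable_poly_exp (m : ℕ) :
    Summable (fun k : ℕ => ((k : ℝ) + 3) ^ m * Real.exp (-(k : ℝ))) := by
  have hr : ‖Real.exp (-1 : ℝ)‖ < 1 := by
    rw [Real.norm_eq_abs, abs_of_pos (Real.exp_pos _)]
    exact Real.exp_lt_one_iff.2 (by norm_num)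
  have h1 : Summable (fun j : ℕ => (j : ℝ) ^ m * Real.exp (-1 : ℝ) ^ j) :=
    summable_pow_mul_geometric_of_norm_lt_one m hr
  have h2 : Summable (fun k : ℕ => ((k + 3 : ℕ) : ℝ) ^ m * Real.exp (-1 : ℝ) ^ (k + 3)) :=
    (summable_nat_add_iff 3).2 h1
  have h3 := h2.mul_right ((Real.exp (-1 : ℝ)) ^ 3)⁻¹
  apply h3.congr
  intro k
  have he : Real.exp (-1 : ℝ) ^ 3 ≠ 0 := by positivity
  push_cast
  rw [pow_add]
  rw [exp_neg_nat k]
  field_simp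

/-- shorthand for the tail probability bound. -/
noncomputable def pb (B : ℝ) (k : ℕ) : ℝ := Real.exp (-(k : ℝ)) * (40 * (B + (k : ℝ) + 3))

lemma pb_nonneg {B : ℝ} (hB : 0 < B) (k : ℕ) : 0 ≤ pb B k := by
  have := Nat.cast_nonneg (α := ℝ) k
  have := Real.exp_pos (-(k : ℝ))
  unfold pb
  nlinarith

end MLaux

open MLaux in
/-- The Hölder constant `K` of the Mittag-Leffler process is a.s. finite and has
finite moments of all orders. -/
theorem mittagLeffler_holder_constant_finite_moments
    {Ω : Type*} [MeasurableSpace Ω] (P : Measure Ω) [IsProbabilityMeasure P]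
    (β : ℝ) (hβ0 : 0 < β) (hβ1 : β < 1)
    (S : Ω → ℝ → ℝ) (hS : IsStableSubordinator β P S)
    (B : ℝ) (hB : 0 < B) :
    (∀ᵐ ω ∂P, holderSup S β B ω < ⊤) ∧
      ∀ p : ℝ, 0 < p → ∫⁻ ω, holderSup S β B ω ^ p ∂P < ⊤ := by
  classical
  have hEm : ∀ k, MeasurableSet (Eset S β B k) := fun k => Eset_measurable hS B k
  have hPk : ∀ k, P (Eset S β B k)ᶜ ≤ ENNReal.ofReal (pb B k) := fun k =>
    Eset_compl_le hβ0 hβ1 hS hB k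
  have hbound : ∀ k (ω : Ω), ω ∈ Eset S β B k →
      holderSup S β B ω ≤ ENNReal.ofReal (9 * Ak β k) := fun k ω hω =>
    holder_bound hβ0 hβ1 (hS.mono ω) (hS.rightCont ω) hB k hω
  have hpbsum : Summable (pb B) := by
    have h1 := (summable_poly_exp 1).mul_left (40 * (B + 3))
    apply Summable.of_nonneg_of_le (fun k => pb_nonneg hB k) _ h1
    intro k
    have hk0 := Nat.cast_nonneg (α := ℝ) k
    have he := Real.exp_pos (-(k : ℝ))
    have hlin : 40 * (B + (k : ℝ) + 3) ≤ 40 * (B + 3) * ((k : ℝ) + 3) := by nlinarith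
    calc pb B k = Real.exp (-(k : ℝ)) * (40 * (B + (k : ℝ) + 3)) := rfl
      _ ≤ Real.exp (-(k : ℝ)) * (40 * (B + 3) * ((k : ℝ) + 3)) :=
          mul_le_mul_of_nonneg_left hlin he.le
      _ = 40 * (B + 3) * (((k : ℝ) + 3) ^ 1 * Real.exp (-(k : ℝ))) := by ring
  constructor
  · -- a.s. finiteness
    rw [ae_iff]
    have hsub : {ω | ¬ holderSup S β B ω < ⊤} ⊆ ⋂ k, (Eset S β B k)ᶜ := by
      intro ω hω
      simp only [Set.mem_iInter, Set.mem_compl_iff]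
      intro k hk
      exact hω (lt_of_le_of_lt (hbound k ω hk) ENNReal.ofReal_lt_top)
    have hub : ∀ k, P {ω | ¬ holderSup S β B ω < ⊤} ≤ ENNReal.ofReal (pb B k) := by
      intro k
      refine (measure_mono hsub).trans ?_
      exact (measure_mono (Set.iInter_subset _ k)).trans (hPk k)
    have htend : Tendsto (fun k : ℕ => ENNReal.ofReal (pb B k)) atTop (𝓝 0) := by
      have h0 := hpbsum.tendsto_atTop_zero
      have := (ENNReal.tendsto_ofReal h0)
      simpa using this
    have : P {ω | ¬ holderSup S β B ω < ⊤} ≤ 0 :=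
      ge_of_tendsto htend (Filter.Eventually.of_forall hub)
    exact le_antisymm this zero_le'
  · intro p hp
    set m : ℕ := ⌈p⌉₊ with hmdef
    -- summability of the dominating series
    have hAk1 : ∀ k : ℕ, (1 : ℝ) ≤ 9 * Ak β (k + 1) := by
      intro k
      have := Ak_ge hβ0 hβ1 (k + 1)
      have hk0 := Nat.cast_nonneg (α := ℝ) k
      push_cast at this
      nlinarith
    have hsum : Summable (fun k : ℕ => (9 * Ak β (k + 1)) ^ p * pb B k) := by
      have hbig := (summable_poly_exp (m + 1)).mul_left ((9 / cb β) ^ m * (40 * (B + 3)))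
      apply Summable.of_nonneg_of_le _ _ hbig
      · intro k
        exact mul_nonneg (Real.rpow_nonneg (by linarith [hAk1 k]) _) (pb_nonneg hB k)
      · intro k
        have hk0 := Nat.cast_nonneg (α := ℝ) k
        have hcb := cb_pos (β := β)
        have he := Real.exp_pos (-(k : ℝ))
        have hAkval : Ak β (k + 1) = ((k : ℝ) + 3) / cb β := by
          rw [Ak]; push_cast; ring_nf
        have h1 : (9 * Ak β (k + 1)) ^ p ≤ (9 * Ak β (k + 1)) ^ (m : ℝ) :=
          Real.rpow_le_rpow_of_exponent_le (hAk1 k) (Nat.le_ceil p)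
        rw [Real.rpow_natCast] at h1
        have h2 : (9 * Ak β (k + 1)) ^ m = (9 / cb β) ^ m * ((k : ℝ) + 3) ^ m := by
          rw [hAkval, ← mul_pow]
          congr 1
          field_simp
        have hlin : 40 * (B + (k : ℝ) + 3) ≤ 40 * (B + 3) * ((k : ℝ) + 3) := by nlinarith
        have h3 : pb B k ≤ Real.exp (-(k : ℝ)) * (40 * (B + 3) * ((k : ℝ) + 3)) :=
          mul_le_mul_of_nonneg_left hlin he.le
        have hpbn := pb_nonneg hB k
        have h4 : (0 : ℝ) ≤ (9 / cb β) ^ m * ((k : ℝ) + 3) ^ m := by positivity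
        calc (9 * Ak β (k + 1)) ^ p * pb B k
            ≤ (9 * Ak β (k + 1)) ^ m * pb B k := mul_le_mul_of_nonneg_right h1 hpbn
          _ = (9 / cb β) ^ m * ((k : ℝ) + 3) ^ m * pb B k := by rw [h2]
          _ ≤ (9 / cb β) ^ m * ((k : ℝ) + 3) ^ m
              * (Real.exp (-(k : ℝ)) * (40 * (B + 3) * ((k : ℝ) + 3))) :=
              mul_le_mul_of_nonneg_left h3 h4
          _ = (9 / cb β) ^ m * (40 * (B + 3))
              * (((k : ℝ) + 3) ^ (m + 1) * Real.exp (-(k : ℝ))) := by ring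
    have hnn : ∀ k : ℕ, 0 ≤ (9 * Ak β (k + 1)) ^ p * pb B k := fun k =>
      mul_nonneg (Real.rpow_nonneg (by linarith [hAk1 k]) _) (pb_nonneg hB k)
    have htsum : (∑' k : ℕ, ENNReal.ofReal ((9 * Ak β (k + 1)) ^ p * pb B k)) ≠ ⊤ := by
      rw [← ENNReal.ofReal_tsum_of_nonneg hnn hsum]
      exact ENNReal.ofReal_ne_top
    -- pointwise domination
    set c0 : ℝ≥0∞ := ENNReal.ofReal (9 * Ak β 0) ^ p with hc0def
    set G : ℕ → Ω → ℝ≥0∞ := fun k =>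
      (Eset S β B k)ᶜ.indicator (fun _ => ENNReal.ofReal (9 * Ak β (k + 1)) ^ p) with hGdef
    have hpt : ∀ ω, holderSup S β B ω ^ p ≤ c0 + ∑' k : ℕ, G k ω := by
      intro ω
      by_cases hex : ∃ k, ω ∈ Eset S β B k
      · have hk0 : ω ∈ Eset S β B (Nat.find hex) := Nat.find_spec hex
        have hK : holderSup S β B ω ^ p ≤ ENNReal.ofReal (9 * Ak β (Nat.find hex)) ^ p :=
          ENNReal.rpow_le_rpow (hbound _ ω hk0) hp.le
        rcases Nat.eq_zero_or_pos (Nat.find hex) with h0 | hposk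
        · rw [h0] at hK
          exact hK.trans (self_le_add_right _ _)
        · obtain ⟨k', hk'⟩ : ∃ k', Nat.find hex = k' + 1 := ⟨Nat.find hex - 1, by omega⟩
          have hnot : ω ∉ Eset S β B k' := Nat.find_min hex (by omega)
          have hterm : G k' ω = ENNReal.ofReal (9 * Ak β (k' + 1)) ^ p := by
            rw [hGdef]
            exact Set.indicator_of_mem (Set.mem_compl hnot) _
          calc holderSup S β B ω ^ p
              ≤ ENNReal.ofReal (9 * Ak β (k' + 1)) ^ p := by rw [← hk']; exact hK
            _ = G k' ω := hterm.symm
            _ ≤ ∑' k : ℕ, G k ω := ENNReal.le_tsum k'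
            _ ≤ c0 + ∑' k : ℕ, G k ω := le_add_self
      · push_neg at hex
        have heq : ∀ k : ℕ, G k ω = ENNReal.ofReal (9 * Ak β (k + 1)) ^ p := by
          intro k
          rw [hGdef]
          exact Set.indicator_of_mem (Set.mem_compl (hex k)) _
        have hge : ∀ k : ℕ, ENNReal.ofReal 1 ^ p ≤ G k ω := by
          intro k
          rw [heq k]
          exact ENNReal.rpow_le_rpow (ENNReal.ofReal_le_ofReal (hAk1 k)) hp.le
        have hcne : (ENNReal.ofReal 1 ^ p : ℝ≥0∞) ≠ 0 := by
          simp only [ENNReal.ofReal_one, ENNReal.one_rpow]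
          exact one_ne_zero
        have htop : (∑' k : ℕ, G k ω) = ⊤ := by
          apply eq_top_iff.2
          calc (⊤ : ℝ≥0∞) = ∑' _ : ℕ, ENNReal.ofReal 1 ^ p :=
                (ENNReal.tsum_const_eq_top_of_ne_zero hcne).symm
            _ ≤ ∑' k : ℕ, G k ω := ENNReal.tsum_le_tsum hge
        rw [htop]
        simp
    -- integrate
    have hGmeas : ∀ k, Measurable (G k) := fun k =>
      measurable_const.indicator (hEm k).compl
    calc ∫⁻ ω, holderSup S β B ω ^ p ∂P
        ≤ ∫⁻ ω, (c0 + ∑' k : ℕ, G k ω) ∂P := lintegral_mono hpt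
      _ = c0 + ∫⁻ ω, (∑' k : ℕ, G k ω) ∂P := by
          rw [lintegral_add_left measurable_const, lintegral_const, measure_univ, mul_one]
      _ = c0 + ∑' k : ℕ, ∫⁻ ω, G k ω ∂P := by
          rw [lintegral_tsum fun k => (hGmeas k).aemeasurable]
      _ = c0 + ∑' k : ℕ, ENNReal.ofReal (9 * Ak β (k + 1)) ^ p * P (Eset S β B k)ᶜ := by
          congr 1
          exact tsum_congr fun k => lintegral_indicator_const (hEm k).compl _
      _ ≤ c0 + ∑' k : ℕ, ENNReal.ofReal ((9 * Ak β (k + 1)) ^ p * pb B k) := by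
          apply add_le_add_right
          apply ENNReal.tsum_le_tsum
          intro k
          have h9 : (0 : ℝ) < 9 * Ak β (k + 1) := by linarith [hAk1 k]
          rw [ENNReal.ofReal_mul (Real.rpow_nonneg h9.le _),
            ← ENNReal.ofReal_rpow_of_pos h9]
          exact mul_le_mul_right (hPk k) _
      _ < ⊤ := by
          apply ENNReal.add_lt_top.2
          constructor
          · exact ENNReal.rpow_lt_top_of_nonneg hp.le ENNReal.ofReal_ne_top
          · exact lt_top_iff_ne_top.2 htsum
end

section
/- Let 0<α<2 and 0<β<1, let M_β be the Mittag-Leffler process (the inverse of a β-stable subordinator) on a probability space (Ω',F',P'), and let ν be the measure on [0,∞) with ν(dx) = (1−β)x^{−β}dx. Then for (P'×ν)-almost every (ω',x), the series Σ_{n=1}^∞ ( M_β((n+1−x)_+, ω') − M_β((n−x)_+, ω') )^α diverges to infinity. (This is the key fact showing that the increment process of the β-Mittag-Leffler fractional SαS motion is generated by a conservative flow.) -/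
open MeasureTheory ProbabilityTheory Filter
open scoped ENNReal

/-- The measure `ν(dx) = (1-β) x^{-β} dx` on `[0,∞)`. -/
noncomputable def nuMeasure (β : ℝ) : Measure ℝ :=
  (volume.restrict (Set.Ici (0 : ℝ))).withDensity
    (fun x => ENNReal.ofReal ((1 - β) * x ^ (-β)))

open scoped Topology

section PathwiseAux

variable {Ω : Type*} {S : Ω → ℝ → ℝ} {ω : Ω}

lemma invProc_le {t u : ℝ} (hu : 0 ≤ u) (h : t ≤ S ω u) : invProc S ω t ≤ u :=
  csInf_le ⟨0, fun v hv => hv.1⟩ ⟨hu, h⟩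

lemma le_invProc {t c : ℝ} (hne : ∃ u : ℝ, 0 ≤ u ∧ t ≤ S ω u)
    (h : ∀ u, 0 ≤ u → t ≤ S ω u → c ≤ u) : c ≤ invProc S ω t :=
  le_csInf hne (fun u hu => h u hu.1 hu.2)

lemma invProc_nonneg_s3 {t : ℝ} (hne : ∃ u : ℝ, 0 ≤ u ∧ t ≤ S ω u) :
    0 ≤ invProc S ω t :=
  le_invProc hne (fun u hu _ => hu)

lemma invProc_mono (hne : ∀ t : ℝ, ∃ u : ℝ, 0 ≤ u ∧ t ≤ S ω u) :
    Monotone (invProc S ω) := by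
  intro t t' h
  exact le_csInf (hne t') (fun u hu => csInf_le ⟨0, fun v hv => hv.1⟩ ⟨hu.1, le_trans h hu.2⟩)

/-- Pathwise divergence of the α-sum. -/
lemma pathwise_tendsto {α x : ℝ} (hα0 : 0 < α)
    (hmono : Monotone (S ω)) (hzero : S ω 0 = 0)
    (hunb : ∀ K : ℕ, ∃ j : ℕ, (K : ℝ) < S ω (j : ℝ))
    (hx : 0 ≤ x)
    (hgood : ∀ k : ℕ, ∃ j, k ≤ j ∧ 1 ≤ S ω (j : ℝ) ∧
      x + S ω ((j+1 : ℕ) : ℝ) < ⌊x + S ω (j : ℝ)⌋ + 1) :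
    Tendsto
      (fun N : ℕ => ∑ n ∈ Finset.Icc 1 N,
        (invProc S ω (max ((n : ℝ) + 1 - x) 0)
          - invProc S ω (max ((n : ℝ) - x) 0)) ^ α)
      atTop atTop := by
  -- nonemptiness of the sets defining invProc
  have hne : ∀ t : ℝ, ∃ u : ℝ, 0 ≤ u ∧ t ≤ S ω u := by
    intro t
    obtain ⟨j, hj⟩ := hunb ⌈t⌉₊
    exact ⟨(j : ℝ), Nat.cast_nonneg j, le_trans (le_trans (Nat.le_ceil t) (by exact_mod_cast le_of_lt hj)) le_rfl⟩
  have hM : Monotone (invProc S ω) := invProc_mono hne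
  set a : ℕ → ℝ := fun n => invProc S ω (max ((n : ℝ) + 1 - x) 0)
      - invProc S ω (max ((n : ℝ) - x) 0) with ha
  have ha_nonneg : ∀ n, 0 ≤ a n := by
    intro n
    have : max ((n : ℝ) - x) 0 ≤ max ((n : ℝ) + 1 - x) 0 :=
      max_le_max (by linarith) le_rfl
    simpa [ha] using sub_nonneg.mpr (hM this)
  -- key step : for every k there is n ≥ k with a n ≥ 1
  have hkey : ∀ k : ℕ, ∃ n : ℕ, k ≤ n ∧ 1 ≤ a n := by
    intro k
    obtain ⟨j0, hj0⟩ := hunb (k + 1)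
    obtain ⟨j, hjj0, hj1, hjlt⟩ := hgood j0
    have hsj : (k : ℝ) + 1 ≤ S ω (j : ℝ) := by
      have : S ω (j0 : ℝ) ≤ S ω (j : ℝ) := hmono (by exact_mod_cast hjj0)
      push_cast at hj0
      linarith
    set z : ℝ := x + S ω (j : ℝ) with hz
    set nZ : ℤ := ⌊z⌋ with hnZ
    have hnZk : (k : ℤ) + 1 ≤ nZ := by
      rw [hnZ, Int.le_floor]
      push_cast
      linarith
    have hnZ0 : (0 : ℤ) ≤ nZ := le_trans (by positivity) hnZk
    refine ⟨nZ.toNat, ?_, ?_⟩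
    · have : (k : ℤ) ≤ nZ := by linarith
      omega
    · have hcast : ((nZ.toNat : ℕ) : ℝ) = (nZ : ℝ) := by
        exact_mod_cast Int.toNat_of_nonneg hnZ0
      -- upper bound for invProc at level n - x
      have hA : invProc S ω (max ((nZ.toNat : ℝ) - x) 0) ≤ (j : ℝ) := by
        apply invProc_le (Nat.cast_nonneg j)
        rw [hcast]
        apply max_le
        · have : (nZ : ℝ) ≤ z := Int.floor_le z
          rw [hz] at this; linarith
        · linarith
      -- lower bound for invProc at level n + 1 - x
      have hB : (j : ℝ) + 1 ≤ invProc S ω (max ((nZ.toNat : ℝ) + 1 - x) 0) := by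
        apply le_invProc (hne _)
        intro u hu0 hut
        by_contra hcon
        push_neg at hcon
        have hSu : S ω u ≤ S ω ((j+1 : ℕ) : ℝ) := by
          apply hmono
          push_cast
          linarith
        have h1 : ((nZ.toNat : ℝ) + 1 - x) ≤ max ((nZ.toNat : ℝ) + 1 - x) 0 := le_max_left _ _
        rw [hcast] at h1
        have : x + S ω ((j+1 : ℕ) : ℝ) < (nZ : ℝ) + 1 := hjlt
        rw [hcast] at hut
        have := le_trans h1 hut
        linarith
      have hAB := sub_le_sub hB hA
      simp only [ha]
      linarith
  -- partial sums
  set f : ℕ → ℝ := fun N => ∑ n ∈ Finset.Icc 1 N, (a n) ^ α with hf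
  have hfmono : Monotone f := by
    intro N N' h
    apply Finset.sum_le_sum_of_subset_of_nonneg
    · exact Finset.Icc_subset_Icc le_rfl h
    · intro n _ _
      exact Real.rpow_nonneg (ha_nonneg n) α
  have hfunb : ∀ K : ℕ, ∃ N : ℕ, (K : ℝ) ≤ f N := by
    intro K
    induction K with
    | zero => exact ⟨0, by simp [hf]⟩
    | succ K ih =>
      obtain ⟨N, hN⟩ := ih
      obtain ⟨n, hnN, hn1⟩ := hkey (N + 1)
      refine ⟨n, ?_⟩
      have h1 : (1 : ℝ) ≤ (a n) ^ α := by
        calc (1 : ℝ) = 1 ^ α := (Real.one_rpow α).symm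
        _ ≤ (a n) ^ α := Real.rpow_le_rpow zero_le_one hn1 hα0.le
      have hsub : insert n (Finset.Icc 1 N) ⊆ Finset.Icc 1 n := by
        intro m hm
        rcases Finset.mem_insert.mp hm with h | h
        · subst h
          rw [Finset.mem_Icc]
          omega
        · rw [Finset.mem_Icc] at h ⊢
          omega
      have hnotmem : n ∉ Finset.Icc 1 N := by
        rw [Finset.mem_Icc]; omega
      have : f N + (a n) ^ α ≤ f n := by
        have := Finset.sum_le_sum_of_subset_of_nonneg hsub
          (fun m _ _ => Real.rpow_nonneg (ha_nonneg m) α)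
        rwa [Finset.sum_insert hnotmem, add_comm ((a n)^α)] at this
      push_cast
      linarith
  apply tendsto_atTop_atTop_of_monotone hfmono
  intro b
  obtain ⟨N, hN⟩ := hfunb ⌈b⌉₊
  exact ⟨N, le_trans (Nat.le_ceil b) hN⟩

end PathwiseAux

namespace MLaux
variable {Ω : Type*} [MeasurableSpace Ω] {P : Measure Ω} {S : Ω → ℝ → ℝ} {β : ℝ}

/-- Unit-time increments of the subordinator. -/
noncomputable def D (S : Ω → ℝ → ℝ) (j : ℕ) (ω : Ω) : ℝ :=
  S ω ((j + 1 : ℕ) : ℝ) - S ω ((j : ℕ) : ℝ)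

lemma measD (hS : IsStableSubordinator β P S) (j : ℕ) : Measurable (D S j) :=
  (hS.meas _).sub (hS.meas _)

lemma D_nonneg (hS : IsStableSubordinator β P S) (j : ℕ) (ω : Ω) : 0 ≤ D S j ω :=
  sub_nonneg.2 (hS.mono ω (by exact_mod_cast Nat.le_succ j))

lemma iIndepD (hS : IsStableSubordinator β P S) :
    iIndepFun (D S) P := by
  rw [iIndepFun_iff_measure_inter_preimage_eq_mul]
  intro T sets hsets
  set N : ℕ := T.sup id + 1 with hN
  have hT : ∀ m ∈ T, m < N := fun m hm => Nat.lt_succ_of_le (Finset.le_sup (f := id) hm)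
  have hmonot : Monotone (fun i : Fin (N+1) => ((i : ℕ) : ℝ)) := by
    intro i j hij
    simp only []
    exact_mod_cast hij
  have h0 : (0 : ℝ) ≤ ((0 : Fin (N+1)) : ℕ) := by simp
  have h := hS.indep N (fun i : Fin (N+1) => ((i : ℕ) : ℝ)) hmonot h0
  have hfun : (fun i : Fin N => fun ω =>
      S ω (((i.succ : Fin (N+1)) : ℕ) : ℝ) - S ω (((i.castSucc : Fin (N+1)) : ℕ) : ℝ))
      = fun i : Fin N => D S (i : ℕ) := by
    funext i ω
    simp [D, Fin.val_succ, Fin.coe_castSucc]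
  rw [hfun] at h
  have h2 := h.measure_inter_preimage_eq_mul (T.attachFin hT)
    (sets := fun i : Fin N => sets (i : ℕ))
    (fun i hi => hsets _ ((Finset.mem_attachFin hT).mp hi))
  have hInter : (⋂ i ∈ T.attachFin hT, D S (i : ℕ) ⁻¹' sets (i : ℕ))
      = ⋂ j ∈ T, D S j ⁻¹' sets j := by
    ext ω
    simp only [Set.mem_iInter, Finset.mem_attachFin]
    exact ⟨fun hh j hj => hh ⟨j, hT j hj⟩ hj, fun hh i hi => hh _ hi⟩
  have hProd : (∏ i ∈ T.attachFin hT, P (D S (i : ℕ) ⁻¹' sets (i : ℕ)))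
      = ∏ j ∈ T, P (D S j ⁻¹' sets j) := by
    refine Finset.prod_bij (fun i _ => (i : ℕ)) ?_ ?_ ?_ ?_
    · intro i hi; exact (Finset.mem_attachFin hT).mp hi
    · intro i hi i' hi' hii'; exact Fin.ext hii'
    · intro j hj; exact ⟨⟨j, hT j hj⟩, (Finset.mem_attachFin hT).mpr hj, rfl⟩
    · intro i hi; rfl
  rw [hInter, hProd] at h2
  exact h2

lemma iIndepSet_pre {f : ℕ → Ω → ℝ}
    (hf : iIndepFun f P)
    {B : ℕ → Set ℝ} (hB : ∀ i, MeasurableSet (B i)) :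
    iIndepSet (fun i => f i ⁻¹' B i) P := by
  classical
  rw [iIndepSet_iff]
  intro T g hg
  have key : ∀ i, i ∈ T → ∃ C : Set ℝ, MeasurableSet C ∧ f i ⁻¹' C = g i := by
    intro i hi
    have hle : MeasurableSpace.generateFrom {f i ⁻¹' B i}
        ≤ MeasurableSpace.comap (f i) inferInstance := by
      refine MeasurableSpace.generateFrom_le ?_
      rintro s hs
      rw [Set.mem_singleton_iff] at hs
      subst hs
      exact ⟨B i, hB i, rfl⟩
    exact MeasurableSpace.measurableSet_comap.mp (hle _ (hg i hi))
  choose! C hC1 hC2 using key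
  have h := hf.measure_inter_preimage_eq_mul T (sets := C) (fun i hi => hC1 i hi)
  have h1 : (⋂ i ∈ T, g i) = ⋂ i ∈ T, f i ⁻¹' C i :=
    Set.iInter₂_congr (fun i hi => (hC2 i hi).symm)
  have h2 : (∏ i ∈ T, P (g i)) = ∏ i ∈ T, P (f i ⁻¹' C i) :=
    Finset.prod_congr rfl (fun i hi => by rw [hC2 i hi])
  rw [h1, h2]
  exact h

lemma S_nonneg (hS : IsStableSubordinator β P S) (ω : Ω) {u : ℝ} (hu : 0 ≤ u) :
    0 ≤ S ω u := by
  have := hS.mono ω hu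
  rwa [hS.zero ω] at this

lemma prob_D_lt (hS : IsStableSubordinator β P S) [IsProbabilityMeasure P]
    {θ ε : ℝ} (hθ : 0 ≤ θ) (j : ℕ) :
    ENNReal.ofReal (Real.exp (-θ ^ β) - Real.exp (-(θ * ε))) ≤ P {ω | D S j ω < ε} := by
  set A : Set Ω := {ω | D S j ω < ε} with hA
  have hAm : MeasurableSet A := measurableSet_lt (measD hS j) measurable_const
  have hlap : ∫ ω, Real.exp (-θ * D S j ω) ∂P = Real.exp (-θ ^ β) := by
    have h := hS.laplace θ hθ ((j : ℕ) : ℝ) ((j + 1 : ℕ) : ℝ) (Nat.cast_nonneg j)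
      (by exact_mod_cast Nat.le_succ j)
    have he : ((j + 1 : ℕ) : ℝ) - ((j : ℕ) : ℝ) = 1 := by push_cast; ring
    rw [he] at h
    simpa [D, neg_one_mul] using h
  have hintexp : Integrable (fun ω => Real.exp (-θ * D S j ω)) P := by
    refine (integrable_const (1 : ℝ)).mono' ?_ ?_
    · exact (((measD hS j).const_mul (-θ)).exp).aestronglyMeasurable
    · refine Filter.Eventually.of_forall fun ω => ?_
      rw [Real.norm_eq_abs, abs_of_pos (Real.exp_pos _)]
      apply Real.exp_le_one_iff.mpr
      have := D_nonneg hS j ω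
      nlinarith
  have hind : ∫ ω, A.indicator (fun _ => (1 : ℝ)) ω ∂P = (P A).toReal :=
    integral_indicator_one hAm
  have hptw : ∀ ω, Real.exp (-θ * D S j ω) - Real.exp (-(θ * ε))
      ≤ A.indicator (fun _ => (1 : ℝ)) ω := by
    intro ω
    by_cases h : ω ∈ A
    · rw [Set.indicator_of_mem h]
      have h1 : Real.exp (-θ * D S j ω) ≤ 1 := by
        apply Real.exp_le_one_iff.mpr
        have := D_nonneg hS j ω
        nlinarith
      have h2 : (0 : ℝ) < Real.exp (-(θ * ε)) := Real.exp_pos _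
      linarith
    · rw [Set.indicator_of_notMem h]
      have hge : ε ≤ D S j ω := not_lt.mp h
      have : Real.exp (-θ * D S j ω) ≤ Real.exp (-(θ * ε)) := by
        apply Real.exp_le_exp.mpr
        nlinarith
      linarith
  have hI : Real.exp (-θ ^ β) - Real.exp (-(θ * ε)) ≤ (P A).toReal := by
    rw [← hind]
    have h1 : ∫ ω, (Real.exp (-θ * D S j ω) - Real.exp (-(θ * ε))) ∂P
        ≤ ∫ ω, A.indicator (fun _ => (1 : ℝ)) ω ∂P :=
      integral_mono (hintexp.sub (integrable_const _))
        ((integrable_const (1:ℝ)).indicator hAm) hptw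
    rw [integral_sub hintexp (integrable_const _), hlap, integral_const] at h1
    simpa using h1
  calc ENNReal.ofReal (Real.exp (-θ ^ β) - Real.exp (-(θ * ε)))
      ≤ ENNReal.ofReal (P A).toReal := ENNReal.ofReal_le_ofReal hI
    _ = P A := ENNReal.ofReal_toReal (measure_ne_top P A)

lemma prob_S_le (hS : IsStableSubordinator β P S) [IsProbabilityMeasure P]
    (K : ℝ) (j : ℕ) :
    P {ω | S ω ((j : ℕ) : ℝ) ≤ K}
      ≤ ENNReal.ofReal (Real.exp K * Real.exp (-(j : ℝ))) := by
  set A : Set Ω := {ω | S ω ((j : ℕ) : ℝ) ≤ K} with hA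
  have hAm : MeasurableSet A := measurableSet_le (hS.meas _) measurable_const
  have hlap : ∫ ω, Real.exp (-(S ω ((j : ℕ) : ℝ))) ∂P = Real.exp (-(j : ℝ)) := by
    have h := hS.laplace 1 zero_le_one 0 ((j : ℕ) : ℝ) le_rfl (Nat.cast_nonneg j)
    have h1 : ∀ ω, -1 * (S ω ((j : ℕ) : ℝ) - S ω 0) = -(S ω ((j : ℕ) : ℝ)) := by
      intro ω; rw [hS.zero ω]; ring
    simp only [h1] at h
    rw [h]
    norm_num
  have hintexp : Integrable (fun ω => Real.exp (-(S ω ((j : ℕ) : ℝ)))) P := by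
    refine (integrable_const (1 : ℝ)).mono' ?_ ?_
    · exact ((hS.meas _).neg.exp).aestronglyMeasurable
    · refine Filter.Eventually.of_forall fun ω => ?_
      rw [Real.norm_eq_abs, abs_of_pos (Real.exp_pos _)]
      apply Real.exp_le_one_iff.mpr
      have := S_nonneg hS ω (Nat.cast_nonneg j)
      linarith
  have hind : ∫ ω, A.indicator (fun _ => (1 : ℝ)) ω ∂P = (P A).toReal :=
    integral_indicator_one hAm
  have hptw : ∀ ω, A.indicator (fun _ => (1 : ℝ)) ω
      ≤ Real.exp K * Real.exp (-(S ω ((j : ℕ) : ℝ))) := by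
    intro ω
    by_cases h : ω ∈ A
    · rw [Set.indicator_of_mem h]
      rw [← Real.exp_add]
      apply Real.one_le_exp
      have : S ω ((j : ℕ) : ℝ) ≤ K := h
      linarith
    · rw [Set.indicator_of_notMem h]
      positivity
  have hI : (P A).toReal ≤ Real.exp K * Real.exp (-(j : ℝ)) := by
    rw [← hind]
    have h1 : ∫ ω, A.indicator (fun _ => (1 : ℝ)) ω ∂P
        ≤ ∫ ω, Real.exp K * Real.exp (-(S ω ((j : ℕ) : ℝ))) ∂P :=
      integral_mono ((integrable_const (1:ℝ)).indicator hAm) (hintexp.const_mul _) hptw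
    rwa [integral_const_mul, hlap] at h1
  calc P A = ENNReal.ofReal (P A).toReal := (ENNReal.ofReal_toReal (measure_ne_top P A)).symm
    _ ≤ ENNReal.ofReal (Real.exp K * Real.exp (-(j : ℝ))) := ENNReal.ofReal_le_ofReal hI

lemma as_unb (hS : IsStableSubordinator β P S) [IsProbabilityMeasure P] :
    ∀ᵐ ω ∂P, ∀ K : ℕ, ∃ j : ℕ, (K : ℝ) < S ω ((j : ℕ) : ℝ) := by
  have hnull : ∀ K : ℕ, P (⋂ j : ℕ, {ω | S ω ((j : ℕ) : ℝ) ≤ (K : ℝ)}) = 0 := by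
    intro K
    refine le_antisymm ?_ zero_le
    have hlim : Tendsto (fun j : ℕ =>
        ENNReal.ofReal (Real.exp (K : ℝ) * Real.exp (-(j : ℝ)))) atTop (𝓝 0) := by
      have h1 : Tendsto (fun j : ℕ => Real.exp (K : ℝ) * Real.exp (-(j : ℝ))) atTop (𝓝 0) := by
        have h2 : Tendsto (fun j : ℕ => -(j : ℝ)) atTop atBot :=
          tendsto_neg_atBot_iff.mpr tendsto_natCast_atTop_atTop
        have h3 := Real.tendsto_exp_atBot.comp h2
        have := h3.const_mul (Real.exp (K : ℝ))
        simpa using this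
      have := (ENNReal.continuous_ofReal.tendsto 0).comp h1
      simpa [Function.comp_def] using this
    refine ge_of_tendsto' hlim fun j => ?_
    exact le_trans (measure_mono (Set.iInter_subset _ j)) (prob_S_le hS (K : ℝ) j)
  rw [ae_iff]
  refine measure_mono_null ?_ (measure_iUnion_null fun K : ℕ => hnull K)
  intro ω hω
  simp only [Set.mem_setOf_eq, not_forall, not_exists, not_lt] at hω
  obtain ⟨K, hK⟩ := hω
  exact Set.mem_iUnion.mpr ⟨K, Set.mem_iInter.mpr fun j => hK j⟩

lemma as_freq (hS : IsStableSubordinator β P S) [IsProbabilityMeasure P]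
    (hβ0 : 0 < β) (hβ1 : β < 1) (m : ℕ) :
    ∀ᵐ ω ∂P, ∀ k : ℕ, ∃ j, k ≤ j ∧ D S j ω < 1/((m:ℝ)+1) := by
  set ε : ℝ := 1/((m:ℝ)+1) with hε
  set θ : ℝ := ((m:ℝ)+2) ^ ((1:ℝ)/(1-β)) with hθdef
  have h1β : (0:ℝ) < 1 - β := by linarith
  have hx : (0:ℝ) < (m:ℝ) + 2 := by positivity
  have hm1 : (0:ℝ) < (m:ℝ) + 1 := by positivity
  have hθpos : 0 < θ := Real.rpow_pos_of_pos hx _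
  have hkey : θ ^ β < θ * ε := by
    have hc : (0:ℝ) < ((m:ℝ)+2) ^ (β/(1-β)) := Real.rpow_pos_of_pos hx _
    have e1 : θ ^ β = ((m:ℝ)+2) ^ (β/(1-β)) := by
      rw [hθdef, ← Real.rpow_mul hx.le]
      congr 1
      field_simp
    have e2 : θ = ((m:ℝ)+2) ^ (β/(1-β)) * ((m:ℝ)+2) := by
      rw [hθdef]
      have h : (1:ℝ)/(1-β) = β/(1-β) + 1 := by field_simp; ring
      rw [h, Real.rpow_add hx, Real.rpow_one]
    rw [e1, hε, e2, mul_one_div, lt_div_iff₀ hm1]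
    nlinarith
  have hp : 0 < Real.exp (-θ ^ β) - Real.exp (-(θ * ε)) := by
    have := Real.exp_lt_exp.mpr (show -(θ * ε) < -θ ^ β by linarith)
    linarith
  set A : ℕ → Set Ω := fun j => {ω | D S j ω < ε} with hAdef
  have hAm : ∀ j, MeasurableSet (A j) :=
    fun j => measurableSet_lt (measD hS j) measurable_const
  have hindep : iIndepSet A P := by
    have h := iIndepSet_pre (iIndepD hS) (B := fun _ => Set.Iio ε)
      (fun _ => measurableSet_Iio)
    exact h
  have htsum : (∑' j, P (A j)) = ∞ := by
    rw [eq_top_iff]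
    calc (⊤ : ℝ≥0∞) = ∑' _ : ℕ, ENNReal.ofReal (Real.exp (-θ ^ β) - Real.exp (-(θ * ε))) :=
          (ENNReal.tsum_const_eq_top_of_ne_zero (by simp only [ne_eq, ENNReal.ofReal_eq_zero, not_le]; exact hp)).symm
      _ ≤ ∑' j, P (A j) := ENNReal.tsum_le_tsum fun j => prob_D_lt hS hθpos.le j
  have hone : P (limsup A atTop) = 1 := measure_limsup_eq_one hAm hindep htsum
  have hae : ∀ᵐ ω ∂P, ω ∈ limsup A atTop := by
    rw [ae_iff]
    have : {ω | ¬ ω ∈ limsup A atTop} = (limsup A atTop)ᶜ := rfl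
    rw [this, prob_compl_eq_zero_iff (MeasurableSet.measurableSet_limsup hAm)]
    exact hone
  filter_upwards [hae] with ω hω
  have hfreq : ∃ᶠ j in atTop, ω ∈ A j := mem_limsup_iff_frequently_mem.mp hω
  rw [frequently_atTop] at hfreq
  intro k
  obtain ⟨j, hjk, hj⟩ := hfreq k
  exact ⟨j, hjk, hj⟩

/-- For a nondecreasing sequence `s` with arbitrarily small increments at levels `≥ 1`,
almost every `x ≥ 0` satisfies the "good phase" condition infinitely often. -/
lemma xnull (s : ℕ → ℝ)
    (h : ∀ m k : ℕ, ∃ j, k ≤ j ∧ 1 ≤ s j ∧ s (j+1) - s j < 1/((m:ℝ)+1)) :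
    volume {x : ℝ | 0 ≤ x ∧
      ¬ ∀ k : ℕ, ∃ j, k ≤ j ∧ 1 ≤ s j ∧ x + s (j+1) < ⌊x + s j⌋ + 1} = 0 := by
  classical
  set B : ℕ → Set ℝ := fun k => {x : ℝ | 0 ≤ x ∧
      ∀ j, k ≤ j → ¬ (1 ≤ s j ∧ x + s (j+1) < ⌊x + s j⌋ + 1)} with hB
  have hsub : {x : ℝ | 0 ≤ x ∧
      ¬ ∀ k : ℕ, ∃ j, k ≤ j ∧ 1 ≤ s j ∧ x + s (j+1) < ⌊x + s j⌋ + 1}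
      ⊆ ⋃ (k : ℕ) (L : ℕ), (B k ∩ Set.Icc 0 (L : ℝ)) := by
    rintro x ⟨hx0, hx⟩
    push_neg at hx
    obtain ⟨k, hk⟩ := hx
    refine Set.mem_iUnion.mpr ⟨k, Set.mem_iUnion.mpr ⟨⌈x⌉₊, ?_⟩⟩
    refine ⟨⟨hx0, fun j hj => ?_⟩, ⟨hx0, Nat.le_ceil x⟩⟩
    intro ⟨h1, h2⟩
    exact absurd h2 (not_lt.mpr (hk j hj h1))
  refine measure_mono_null hsub (measure_iUnion_null fun k => measure_iUnion_null fun L => ?_)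
  refine le_antisymm ?_ zero_le
  have hlim : Tendsto (fun m : ℕ =>
      (((L:ℕ) + 2 : ℕ) : ℝ≥0∞) * ENNReal.ofReal (1/((m:ℝ)+1))) atTop (𝓝 0) := by
    have h1 : Tendsto (fun m : ℕ => ENNReal.ofReal (1/((m:ℝ)+1))) atTop (𝓝 0) := by
      have := (ENNReal.continuous_ofReal.tendsto 0).comp
        tendsto_one_div_add_atTop_nhds_zero_nat
      simpa [Function.comp_def] using this
    have h2 := ENNReal.Tendsto.const_mul (a := (((L:ℕ) + 2 : ℕ) : ℝ≥0∞)) h1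
      (Or.inr (by simp))
    simpa using h2
  refine ge_of_tendsto' hlim fun m => ?_
  obtain ⟨j, hjk, hj1, hjd⟩ := h m k
  have hcov : B k ∩ Set.Icc 0 (L : ℝ) ⊆
      ⋃ n ∈ Finset.Icc ⌊s j⌋ (⌊s j⌋ + L + 1),
        Set.Icc ((n : ℝ) + 1 - s (j+1)) ((n : ℝ) + 1 - s j) := by
    rintro x ⟨⟨hx0, hBx⟩, hxL⟩
    have hnot := hBx j hjk
    push_neg at hnot
    have hge : (⌊x + s j⌋ : ℝ) + 1 ≤ x + s (j+1) := hnot hj1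
    set n : ℤ := ⌊x + s j⌋ with hn
    have hmem : n ∈ Finset.Icc ⌊s j⌋ (⌊s j⌋ + L + 1) := by
      rw [Finset.mem_Icc]
      constructor
      · exact Int.floor_le_floor (by linarith)
      · have h1 : (n : ℝ) ≤ x + s j := Int.floor_le _
        have h2 : s j < (⌊s j⌋ : ℝ) + 1 := Int.lt_floor_add_one _
        have : (n : ℝ) < (⌊s j⌋ : ℝ) + (L : ℝ) + 2 := by
          have := hxL.2
          linarith
        have : n < ⌊s j⌋ + (L : ℤ) + 2 := by exact_mod_cast this
        omega
    refine Set.mem_biUnion hmem ?_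
    constructor
    · linarith
    · have := Int.lt_floor_add_one (x + s j)
      rw [← hn] at this
      linarith
  calc volume (B k ∩ Set.Icc 0 (L : ℝ))
      ≤ volume (⋃ n ∈ Finset.Icc ⌊s j⌋ (⌊s j⌋ + L + 1),
        Set.Icc ((n : ℝ) + 1 - s (j+1)) ((n : ℝ) + 1 - s j)) := measure_mono hcov
    _ ≤ ∑ n ∈ Finset.Icc ⌊s j⌋ (⌊s j⌋ + L + 1),
        volume (Set.Icc ((n : ℝ) + 1 - s (j+1)) ((n : ℝ) + 1 - s j)) :=
          measure_biUnion_finset_le _ _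
    _ ≤ ∑ _n ∈ Finset.Icc ⌊s j⌋ (⌊s j⌋ + L + 1), ENNReal.ofReal (1/((m:ℝ)+1)) := by
          refine Finset.sum_le_sum fun n _ => ?_
          rw [Real.volume_Icc]
          apply ENNReal.ofReal_le_ofReal
          linarith
    _ = (Finset.Icc ⌊s j⌋ (⌊s j⌋ + L + 1)).card • ENNReal.ofReal (1/((m:ℝ)+1)) :=
          (Finset.sum_const _)
    _ = (((L:ℕ) + 2 : ℕ) : ℝ≥0∞) * ENNReal.ofReal (1/((m:ℝ)+1)) := by
          rw [Int.card_Icc, show (⌊s j⌋ + (L:ℤ) + 1 + 1 - ⌊s j⌋) = (((L + 2 : ℕ) : ℤ)) by push_cast; ring,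
            Int.toNat_natCast, nsmul_eq_mul]

end MLaux

open MLaux in
/-- For `(P' × ν)`-almost every `(ω, x)`, the series
`Σ_n (M_β((n+1-x)_+) - M_β((n-x)_+))^α` diverges to infinity. -/
theorem mittagLeffler_increments_alpha_sum_diverges
    {Ω : Type*} [MeasurableSpace Ω] (P : Measure Ω) [IsProbabilityMeasure P]
    (α β : ℝ) (hα0 : 0 < α) (hα2 : α < 2) (hβ0 : 0 < β) (hβ1 : β < 1)
    (S : Ω → ℝ → ℝ) (hS : IsStableSubordinator β P S) :
    ∀ᵐ q ∂(P.prod (nuMeasure β)),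
      Tendsto
        (fun N : ℕ => ∑ n ∈ Finset.Icc 1 N,
          (invProc S q.1 (max ((n : ℝ) + 1 - q.2) 0)
            - invProc S q.1 (max ((n : ℝ) - q.2) 0)) ^ α)
        atTop atTop := by

  classical
  have hsf : SFinite (nuMeasure β) := by unfold nuMeasure; infer_instance
  -- the good set
  set G : Set (Ω × ℝ) :=
    {q : Ω × ℝ | 0 ≤ q.2} ∩
    ((⋂ K : ℕ, ⋃ j : ℕ, {q : Ω × ℝ | (K : ℝ) < S q.1 ((j : ℕ) : ℝ)}) ∩
      (⋂ k : ℕ, ⋃ j : ℕ, ⋃ (_ : k ≤ j),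
        ({q : Ω × ℝ | 1 ≤ S q.1 ((j : ℕ) : ℝ)} ∩
         {q : Ω × ℝ | q.2 + S q.1 ((j + 1 : ℕ) : ℝ) < ⌊q.2 + S q.1 ((j : ℕ) : ℝ)⌋ + 1}))) with hG
  have hmS : ∀ j : ℕ, Measurable (fun q : Ω × ℝ => S q.1 ((j : ℕ) : ℝ)) :=
    fun j => (hS.meas _).comp measurable_fst
  have hGm : MeasurableSet G := by
    refine (measurableSet_le measurable_const measurable_snd).inter (MeasurableSet.inter ?_ ?_)
    · exact MeasurableSet.iInter fun K => MeasurableSet.iUnion fun j =>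
        measurableSet_lt measurable_const (hmS j)
    · refine MeasurableSet.iInter fun k => MeasurableSet.iUnion fun j =>
        MeasurableSet.iUnion fun _ => (measurableSet_le measurable_const (hmS j)).inter ?_
      refine measurableSet_lt (measurable_snd.add (hmS (j+1))) ?_
      have hfl : Measurable (fun q : Ω × ℝ => (⌊q.2 + S q.1 ((j : ℕ) : ℝ)⌋ : ℤ)) :=
        (measurable_snd.add (hmS j)).floor
      have : Measurable (fun q : Ω × ℝ => ((⌊q.2 + S q.1 ((j : ℕ) : ℝ)⌋ : ℤ) : ℝ)) :=
        measurable_from_top.comp hfl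
      exact this.add measurable_const
  -- complement is null
  have hcompl : (P.prod (nuMeasure β)) Gᶜ = 0 := by
    rw [Measure.measure_prod_null hGm.compl]
    have hae : ∀ᵐ ω ∂P, (∀ K : ℕ, ∃ j : ℕ, (K : ℝ) < S ω ((j : ℕ) : ℝ)) ∧
        ∀ m : ℕ, ∀ k : ℕ, ∃ j, k ≤ j ∧ D S j ω < 1/((m:ℝ)+1) :=
      (as_unb hS).and (ae_all_iff.mpr fun m => as_freq hS hβ0 hβ1 m)
    filter_upwards [hae] with ω hω
    obtain ⟨hunb, hfreq⟩ := hω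
    -- the section
    have hgood_hyp : ∀ m k : ℕ, ∃ j, k ≤ j ∧ 1 ≤ S ω ((j : ℕ) : ℝ) ∧
        S ω ((j + 1 : ℕ) : ℝ) - S ω ((j : ℕ) : ℝ) < 1/((m:ℝ)+1) := by
      intro m k
      obtain ⟨j1, hj1⟩ := hunb 1
      obtain ⟨j, hjge, hjD⟩ := hfreq m (max k j1)
      refine ⟨j, le_trans (le_max_left _ _) hjge, ?_, hjD⟩
      have : S ω ((j1 : ℕ) : ℝ) ≤ S ω ((j : ℕ) : ℝ) :=
        hS.mono ω (by exact_mod_cast le_trans (le_max_right k j1) hjge)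
      push_cast at hj1
      linarith
    have hx0 := xnull (fun j => S ω ((j : ℕ) : ℝ)) hgood_hyp
    have hsec : (Prod.mk ω ⁻¹' Gᶜ) ⊆
        Set.Iio (0:ℝ) ∪ {x : ℝ | 0 ≤ x ∧
          ¬ ∀ k : ℕ, ∃ j, k ≤ j ∧ 1 ≤ S ω ((j : ℕ) : ℝ) ∧
            x + S ω ((j + 1 : ℕ) : ℝ) < ⌊x + S ω ((j : ℕ) : ℝ)⌋ + 1} := by
      intro x hx
      simp only [Set.mem_preimage, Set.mem_compl_iff, hG, Set.mem_inter_iff, Set.mem_iInter,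
        Set.mem_iUnion, Set.mem_setOf_eq, not_and, not_forall, not_exists] at hx
      by_cases hx0' : 0 ≤ x
      · right
        refine ⟨hx0', ?_⟩
        intro hcon
        obtain ⟨k, hk⟩ := hx hx0' (fun K => hunb K)
        obtain ⟨j, hj1, hj2, hj3⟩ := hcon k
        exact hk j hj1 hj2 hj3
      · left
        exact lt_of_not_ge hx0'
    refine measure_mono_null hsec (measure_union_null ?_ ?_)
    · have hac : nuMeasure β ≪ volume.restrict (Set.Ici (0:ℝ)) :=
        withDensity_absolutelyContinuous _ _
      apply hac
      rw [Measure.restrict_apply measurableSet_Iio]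
      rw [Set.Iio_inter_Ici, Set.Ico_self]
      exact measure_empty
    · have hac : nuMeasure β ≪ volume.restrict (Set.Ici (0:ℝ)) :=
        withDensity_absolutelyContinuous _ _
      apply hac
      exact le_antisymm (le_trans (Measure.restrict_apply_le _ _) (le_of_eq hx0)) zero_le
  have hGae : ∀ᵐ q ∂(P.prod (nuMeasure β)), q ∈ G := by
    rw [ae_iff]
    convert hcompl using 2
    rfl
  filter_upwards [hGae] with q hq
  obtain ⟨hq2, hq3, hq4⟩ := hq
  refine pathwise_tendsto hα0 (hS.mono q.1) (hS.zero q.1) (fun K => ?_) hq2 (fun k => ?_)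
  · obtain ⟨j, hj⟩ := Set.mem_iUnion.mp (Set.mem_iInter.mp hq3 K)
    exact ⟨j, hj⟩
  · obtain ⟨j, hj⟩ := Set.mem_iUnion.mp (Set.mem_iInter.mp hq4 k)
    obtain ⟨hkj, hj12⟩ := Set.mem_iUnion.mp hj
    exact ⟨j, hkj, hj12.1, hj12.2⟩
end
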